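/- For every sentence φ ∈ ESO_f(k∀) there is a sentence φ′ of independence logic with at most 2k universal quantifiers (φ′ ∈ FO(⊥_c)(2k∀)) such that for all structures A with at least two elements: A ⊨ φ if and only if A ⊨ φ′ under strict team semantics. -/

import Mathlib

open FirstOrder FirstOrder.Language FirstOrder.Language.Structure

namespace TeamSem

universe u v w

/-- Formulas of team logic in negation normal form over a first-order language `L`,
with variables in `ℕ`: first-order literals, dependence atoms `=(x̄, y)`,
conditional independence atoms `ȳ ⊥_{x̄} z̄`, inclusion atoms `x̄ ⊆ ȳ`,
conjunction, disjunction and quantifiers. -/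
inductive TF (L : FirstOrder.Language.{u, v}) : Type (max u v) where
  | rel : {n : ℕ} → L.Relations n → (Fin n → L.Term ℕ) → TF L
  | nrel : {n : ℕ} → L.Relations n → (Fin n → L.Term ℕ) → TF L
  | teq : L.Term ℕ → L.Term ℕ → TF L
  | tne : L.Term ℕ → L.Term ℕ → TF L
  | dep : List ℕ → ℕ → TF L
  | indep : List ℕ → List ℕ → List ℕ → TF L
  | inc : List ℕ → List ℕ → TF L
  | and : TF L → TF L → TF L
  | or : TF L → TF L → TF L
  | ex : ℕ → TF L → TF L
  | all : ℕ → TF L → TF L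

variable {L : FirstOrder.Language.{u, v}}

/-- The variables occurring in a term. -/
def tvars : L.Term ℕ → Set ℕ
  | .var n => {n}
  | .func _ ts => ⋃ i, tvars (ts i)

/-- Realization of a term under a partial assignment (an assignment whose domain is
the set of variables where it takes a `some` value). -/
def oreal {M : Type w} [L.Structure M] (s : ℕ → Option M) : L.Term ℕ → Option M
  | .var n => s n
  | .func f ts =>
      if h : ∀ i, (oreal s (ts i)).isSome then
        some (funMap f fun i => (oreal s (ts i)).get (h i))
      else none

/-- The set of free variables of a team-logic formula. -/
def freeVars : TF L → Set ℕ
  | .rel _ ts => ⋃ i, tvars (ts i)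
  | .nrel _ ts => ⋃ i, tvars (ts i)
  | .teq t u => tvars t ∪ tvars u
  | .tne t u => tvars t ∪ tvars u
  | .dep xs y => {n | n ∈ xs} ∪ {y}
  | .indep xs ys zs => {n | n ∈ xs ++ ys ++ zs}
  | .inc xs ys => {n | n ∈ xs ++ ys}
  | .and φ ψ => freeVars φ ∪ freeVars ψ
  | .or φ ψ => freeVars φ ∪ freeVars ψ
  | .ex v φ => freeVars φ \ {v}
  | .all v φ => freeVars φ \ {v}

/-- The list of quantified (bound) variables of a formula, with multiplicity. -/
def boundVars : TF L → List ℕ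
  | .and φ ψ => boundVars φ ++ boundVars ψ
  | .or φ ψ => boundVars φ ++ boundVars ψ
  | .ex v φ => v :: boundVars φ
  | .all v φ => v :: boundVars φ
  | _ => []

/-- The number of universal quantifiers occurring in a formula. -/
def uCount : TF L → ℕ
  | .and φ ψ => uCount φ + uCount ψ
  | .or φ ψ => uCount φ + uCount ψ
  | .ex _ φ => uCount φ
  | .all _ φ => uCount φ + 1
  | _ => 0

/-- A dependence atom occurs in the formula. -/
def hasDep : TF L → Prop
  | .dep _ _ => True
  | .and φ ψ => hasDep φ ∨ hasDep ψ
  | .or φ ψ => hasDep φ ∨ hasDep ψ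
  | .ex _ φ => hasDep φ
  | .all _ φ => hasDep φ
  | _ => False

/-- An independence atom occurs in the formula. -/
def hasIndep : TF L → Prop
  | .indep _ _ _ => True
  | .and φ ψ => hasIndep φ ∨ hasIndep ψ
  | .or φ ψ => hasIndep φ ∨ hasIndep ψ
  | .ex _ φ => hasIndep φ
  | .all _ φ => hasIndep φ
  | _ => False

/-- An inclusion atom occurs in the formula. -/
def hasInc : TF L → Prop
  | .inc _ _ => True
  | .and φ ψ => hasInc φ ∨ hasInc ψ
  | .or φ ψ => hasInc φ ∨ hasInc ψ
  | .ex _ φ => hasInc φ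
  | .all _ φ => hasInc φ
  | _ => False

/-- Quantifier-free formulas. -/
def quantFree : TF L → Prop
  | .and φ ψ => quantFree φ ∧ quantFree ψ
  | .or φ ψ => quantFree φ ∧ quantFree ψ
  | .ex _ _ => False
  | .all _ _ => False
  | _ => True

/-- First-order formulas: no dependence, independence or inclusion atoms. -/
def isFO : TF L → Prop
  | .dep _ _ => False
  | .indep _ _ _ => False
  | .inc _ _ => False
  | .and φ ψ => isFO φ ∧ isFO ψ
  | .or φ ψ => isFO φ ∧ isFO ψ
  | .ex _ φ => isFO φ
  | .all _ φ => isFO φ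
  | _ => True

/-- A dependency atom (dependence, independence or inclusion atom). -/
def isAtom : TF L → Prop
  | .dep _ _ => True
  | .indep _ _ _ => True
  | .inc _ _ => True
  | _ => False

/-- A conjunction of dependency atoms. -/
def isAtomConj : TF L → Prop
  | .and φ ψ => isAtomConj φ ∧ isAtomConj ψ
  | φ => isAtom φ

/-- Strict team semantics.  A team is a set of partial assignments `ℕ → Option M`;
a variable is in the domain of an assignment iff the assignment gives it a `some`
value. -/
def strictSat (M : Type w) [L.Structure M] : Set (ℕ → Option M) → TF L → Prop
  | X, .rel R ts => ∀ s ∈ X, ∃ v, (∀ i, oreal s (ts i) = some (v i)) ∧ RelMap R v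
  | X, .nrel R ts => ∀ s ∈ X, ∃ v, (∀ i, oreal s (ts i) = some (v i)) ∧ ¬ RelMap R v
  | X, .teq t u => ∀ s ∈ X, ∃ a : M, oreal s t = some a ∧ oreal s u = some a
  | X, .tne t u => ∀ s ∈ X, ∃ a b : M, oreal s t = some a ∧ oreal s u = some b ∧ a ≠ b
  | X, .dep xs y => ∀ s ∈ X, ∀ s' ∈ X, xs.map s = xs.map s' → s y = s' y
  | X, .indep xs ys zs => ∀ s ∈ X, ∀ s' ∈ X, xs.map s = xs.map s' →
      ∃ s'' ∈ X, xs.map s'' = xs.map s ∧ ys.map s'' = ys.map s ∧ zs.map s'' = zs.map s'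
  | X, .inc xs ys => ∀ s ∈ X, ∃ s' ∈ X, xs.map s = ys.map s'
  | X, .and φ ψ => strictSat M X φ ∧ strictSat M X ψ
  | X, .or φ ψ => ∃ Y Z, Y ∪ Z = X ∧ Y ∩ Z = ∅ ∧ strictSat M Y φ ∧ strictSat M Z ψ
  | X, .ex v φ => ∃ F : (ℕ → Option M) → M,
      strictSat M ((fun s => Function.update s v (some (F s))) '' X) φ
  | X, .all v φ =>
      strictSat M {t | ∃ s ∈ X, ∃ m : M, t = Function.update s v (some m)} φ

/-- Lax team semantics: the splitting in the disjunction need not be disjoint, and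
the existential quantifier may pick a nonempty set of witnesses for each assignment. -/
def laxSat (M : Type w) [L.Structure M] : Set (ℕ → Option M) → TF L → Prop
  | X, .rel R ts => ∀ s ∈ X, ∃ v, (∀ i, oreal s (ts i) = some (v i)) ∧ RelMap R v
  | X, .nrel R ts => ∀ s ∈ X, ∃ v, (∀ i, oreal s (ts i) = some (v i)) ∧ ¬ RelMap R v
  | X, .teq t u => ∀ s ∈ X, ∃ a : M, oreal s t = some a ∧ oreal s u = some a
  | X, .tne t u => ∀ s ∈ X, ∃ a b : M, oreal s t = some a ∧ oreal s u = some b ∧ a ≠ b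
  | X, .dep xs y => ∀ s ∈ X, ∀ s' ∈ X, xs.map s = xs.map s' → s y = s' y
  | X, .indep xs ys zs => ∀ s ∈ X, ∀ s' ∈ X, xs.map s = xs.map s' →
      ∃ s'' ∈ X, xs.map s'' = xs.map s ∧ ys.map s'' = ys.map s ∧ zs.map s'' = zs.map s'
  | X, .inc xs ys => ∀ s ∈ X, ∃ s' ∈ X, xs.map s = ys.map s'
  | X, .and φ ψ => laxSat M X φ ∧ laxSat M X ψ
  | X, .or φ ψ => ∃ Y Z, Y ∪ Z = X ∧ laxSat M Y φ ∧ laxSat M Z ψ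
  | X, .ex v φ => ∃ H : (ℕ → Option M) → Set M, (∀ s ∈ X, (H s).Nonempty) ∧
      laxSat M {t | ∃ s ∈ X, ∃ m ∈ H s, t = Function.update s v (some m)} φ
  | X, .all v φ =>
      laxSat M {t | ∃ s ∈ X, ∃ m : M, t = Function.update s v (some m)} φ

/-- Ordinary (Tarskian) first-order satisfaction by a single assignment, for
first-order formulas.  (The value on the dependency atoms is irrelevant.) -/
def foSat (M : Type w) [L.Structure M] : (ℕ → Option M) → TF L → Prop
  | s, .rel R ts => ∃ v, (∀ i, oreal s (ts i) = some (v i)) ∧ RelMap R v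
  | s, .nrel R ts => ∃ v, (∀ i, oreal s (ts i) = some (v i)) ∧ ¬ RelMap R v
  | s, .teq t u => ∃ a : M, oreal s t = some a ∧ oreal s u = some a
  | s, .tne t u => ∃ a b : M, oreal s t = some a ∧ oreal s u = some b ∧ a ≠ b
  | s, .and φ ψ => foSat M s φ ∧ foSat M s ψ
  | s, .or φ ψ => foSat M s φ ∨ foSat M s ψ
  | s, .ex v φ => ∃ m : M, foSat M (Function.update s v (some m)) φ
  | s, .all v φ => ∀ m : M, foSat M (Function.update s v (some m)) φ
  | _, _ => True

/-- The empty assignment. -/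
def emptyAssign (M : Type w) : ℕ → Option M := fun _ => none

/-- A sentence `φ` is true in `M` if the team `{∅}` consisting of the empty
assignment satisfies `φ` (strict semantics). -/
def tTrue (M : Type w) [L.Structure M] (φ : TF L) : Prop :=
  strictSat M {emptyAssign M} φ

/-- A sentence of `FO(C)(k∀)`: every variable is quantified exactly once, it has no
free variables, and at most `k` universal quantifiers occur. -/
def sentenceKAll (φ : TF L) (k : ℕ) : Prop :=
  freeVars φ = ∅ ∧ (boundVars φ).Nodup ∧ uCount φ ≤ k

/-- Universal quantifier block. -/
def alls : List ℕ → TF L → TF L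
  | [], φ => φ
  | v :: vs, φ => .all v (alls vs φ)

/-- Existential quantifier block. -/
def exs : List ℕ → TF L → TF L
  | [], φ => φ
  | v :: vs, φ => .ex v (exs vs φ)

end TeamSem

namespace TeamSem

/-- Terms of the language `L` extended with function symbols from `F` (where `f : F`
has arity `ar f`), with first-order variables in `ℕ`. -/
inductive ETerm (L : FirstOrder.Language.{u, v}) (F : Type) (ar : F → ℕ) :
    Type (max u v) where
  | var : ℕ → ETerm L F ar
  | func : {n : ℕ} → L.Functions n → (Fin n → ETerm L F ar) → ETerm L F ar
  | efunc : (f : F) → (Fin (ar f) → ETerm L F ar) → ETerm L F ar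

/-- Quantifier-free first-order formulas over `L` extended with function symbols
from `F`. -/
inductive EQF (L : FirstOrder.Language.{u, v}) (F : Type) (ar : F → ℕ) :
    Type (max u v) where
  | rel : {n : ℕ} → L.Relations n → (Fin n → ETerm L F ar) → EQF L F ar
  | nrel : {n : ℕ} → L.Relations n → (Fin n → ETerm L F ar) → EQF L F ar
  | teq : ETerm L F ar → ETerm L F ar → EQF L F ar
  | tne : ETerm L F ar → ETerm L F ar → EQF L F ar
  | and : EQF L F ar → EQF L F ar → EQF L F ar
  | or : EQF L F ar → EQF L F ar → EQF L F ar

variable {L : FirstOrder.Language.{u, v}} {F : Type} {ar : F → ℕ}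

/-- Realization of an extended term, given interpretations `fi` of the extra
function symbols and an assignment `s` of the variables. -/
def ETerm.realize {M : Type w} [L.Structure M]
    (fi : ∀ f : F, (Fin (ar f) → M) → M) (s : ℕ → M) : ETerm L F ar → M
  | .var n => s n
  | .func g ts => funMap g fun i => (ts i).realize fi s
  | .efunc f ts => fi f fun i => (ts i).realize fi s

/-- Realization of a quantifier-free extended formula. -/
def EQF.realize {M : Type w} [L.Structure M]
    (fi : ∀ f : F, (Fin (ar f) → M) → M) (s : ℕ → M) : EQF L F ar → Prop
  | .rel R ts => RelMap R fun i => (ts i).realize fi s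
  | .nrel R ts => ¬ RelMap R fun i => (ts i).realize fi s
  | .teq t u => t.realize fi s = u.realize fi s
  | .tne t u => t.realize fi s ≠ u.realize fi s
  | .and φ ψ => φ.realize fi s ∧ ψ.realize fi s
  | .or φ ψ => φ.realize fi s ∨ ψ.realize fi s

/-- All variables occurring in the term are among `x₀, …, x_{r-1}`. -/
def ETerm.varsLT (r : ℕ) : ETerm L F ar → Prop
  | .var n => n < r
  | .func _ ts => ∀ i, (ts i).varsLT r
  | .efunc _ ts => ∀ i, (ts i).varsLT r

/-- All variables occurring in the formula are among `x₀, …, x_{r-1}`. -/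
def EQF.varsLT (r : ℕ) : EQF L F ar → Prop
  | .rel _ ts => ∀ i, (ts i).varsLT r
  | .nrel _ ts => ∀ i, (ts i).varsLT r
  | .teq t u => t.varsLT r ∧ u.varsLT r
  | .tne t u => t.varsLT r ∧ u.varsLT r
  | .and φ ψ => φ.varsLT r ∧ ψ.varsLT r
  | .or φ ψ => φ.varsLT r ∧ ψ.varsLT r

/-- Truth of the `ESO_f` sentence `∃f₁…∃fₙ ∀x₁…∀x_r θ` in `M`: there are
interpretations of the function symbols such that `θ` holds under every assignment
of the universally quantified variables. -/
def esoTrue (M : Type w) [L.Structure M] (θ : EQF L F ar) : Prop :=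
  ∃ fi : ∀ f : F, (Fin (ar f) → M) → M, ∀ s : ℕ → M, θ.realize fi s

end TeamSem

namespace TeamSem

section Generic
variable {L : FirstOrder.Language.{u, v}} {M : Type w} [L.Structure M]

lemma strictSat_foldr_and (X : Set (ℕ → Option M)) (l : List (TF L)) (b : TF L) :
    strictSat M X (l.foldr .and b) ↔ (∀ ψ ∈ l, strictSat M X ψ) ∧ strictSat M X b := by
  induction l with
  | nil => simp
  | cons a l ih =>
      simp only [List.foldr_cons, List.mem_cons]
      constructor
      · rintro ⟨h1, h2⟩
        rw [ih] at h2
        exact ⟨fun ψ hψ => hψ.elim (fun h => h ▸ h1) (h2.1 ψ), h2.2⟩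
      · rintro ⟨h1, h2⟩
        exact ⟨h1 a (Or.inl rfl), ih.2 ⟨fun ψ hψ => h1 ψ (Or.inr hψ), h2⟩⟩

lemma foSat_foldr_or (s : ℕ → Option M) (l : List (TF L)) (b : TF L) :
    foSat M s (l.foldr .or b) ↔ (∃ ψ ∈ l, foSat M s ψ) ∨ foSat M s b := by
  induction l with
  | nil => simp
  | cons a l ih =>
      simp only [List.foldr_cons, List.mem_cons]
      show foSat M s a ∨ _ ↔ _
      rw [ih]
      constructor
      · rintro (h | h | h)
        · exact Or.inl ⟨a, Or.inl rfl, h⟩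
        · exact Or.inl ⟨h.choose, Or.inr h.choose_spec.1, h.choose_spec.2⟩
        · exact Or.inr h
      · rintro (⟨ψ, (rfl | hψ), h⟩ | h)
        · exact Or.inl h
        · exact Or.inr (Or.inl ⟨ψ, hψ, h⟩)
        · exact Or.inr (Or.inr h)

lemma strictSat_iff_foSat (φ : TF L) (hfo : isFO φ) (hqf : quantFree φ) (X : Set (ℕ → Option M)) :
    strictSat M X φ ↔ ∀ s ∈ X, foSat M s φ := by
  induction φ generalizing X with
  | rel R ts => rfl
  | nrel R ts => rfl
  | teq t u => rfl
  | tne t u => rfl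
  | dep xs y => exact absurd hfo id
  | indep xs ys zs => exact absurd hfo id
  | inc xs ys => exact absurd hfo id
  | and φ ψ ihφ ihψ =>
      show strictSat M X φ ∧ strictSat M X ψ ↔ _
      rw [ihφ hfo.1 hqf.1, ihψ hfo.2 hqf.2]
      constructor
      · rintro ⟨h1, h2⟩ s hs; exact ⟨h1 s hs, h2 s hs⟩
      · intro h; exact ⟨fun s hs => (h s hs).1, fun s hs => (h s hs).2⟩
  | or φ ψ ihφ ihψ =>
      constructor
      · rintro ⟨Y, Z, hYZ, _, hY, hZ⟩ s hs
        rw [← hYZ] at hs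
        rcases hs with hs | hs
        · exact Or.inl ((ihφ hfo.1 hqf.1 Y).1 hY s hs)
        · exact Or.inr ((ihψ hfo.2 hqf.2 Z).1 hZ s hs)
      · intro h
        classical
        refine ⟨{s ∈ X | foSat M s φ}, {s ∈ X | ¬ foSat M s φ}, ?_, ?_, ?_, ?_⟩
        · ext s
          simp only [Set.mem_union, Set.mem_setOf_eq]
          constructor
          · rintro (h | h) <;> exact h.1
          · intro hs; by_cases hc : foSat M s φ
            · exact Or.inl ⟨hs, hc⟩
            · exact Or.inr ⟨hs, hc⟩
        · ext s; simp only [Set.mem_inter_iff, Set.mem_setOf_eq]; tauto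
        · exact (ihφ hfo.1 hqf.1 _).2 (fun s hs => hs.2)
        · refine (ihψ hfo.2 hqf.2 _).2 (fun s hs => ?_)
          rcases h s hs.1 with h' | h'
          · exact absurd h' hs.2
          · exact h'
  | ex v φ ih => exact absurd hqf id
  | all v φ ih => exact absurd hqf id

/-- iterated universal extension of a team -/
def extA : List ℕ → Set (ℕ → Option M) → Set (ℕ → Option M)
  | [], X => X
  | v :: vs, X => extA vs {t | ∃ s ∈ X, ∃ m : M, t = Function.update s v (some m)}

lemma strictSat_alls (l : List ℕ) (φ : TF L) (X : Set (ℕ → Option M)) :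
    strictSat M X (alls l φ) ↔ strictSat M (extA l X) φ := by
  induction l generalizing X with
  | nil => rfl
  | cons v vs ih => exact ih _

lemma extA_eq [Nonempty M] (l : List ℕ) (hl : l.Nodup) (X : Set (ℕ → Option M)) :
    extA l X = {t | ∃ s ∈ X, ∃ w : ℕ → M, t = fun i => if i ∈ l then some (w i) else s i} := by
  classical
  induction l generalizing X with
  | nil =>
      ext t
      simp only [extA, Set.mem_setOf_eq, List.not_mem_nil, if_false]
      constructor
      · intro ht
        exact ⟨t, ht, Classical.arbitrary _, rfl⟩
      · rintro ⟨s, hs, w, rfl⟩; exact hs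
  | cons v vs ih =>
      have hv : v ∉ vs := (List.nodup_cons.1 hl).1
      show extA vs _ = _
      rw [ih (List.nodup_cons.1 hl).2]
      ext t
      simp only [Set.mem_setOf_eq]
      constructor
      · rintro ⟨s₁, ⟨s, hs, m, rfl⟩, w, rfl⟩
        refine ⟨s, hs, fun i => if i = v then m else w i, ?_⟩
        funext i
        by_cases hivs : i ∈ vs
        · have : i ≠ v := fun h => hv (h ▸ hivs)
          simp [hivs, this, List.mem_cons]
        · by_cases hiv : i = v
          · subst hiv
            simp [hivs, Function.update]
          · simp [hivs, hiv, List.mem_cons, Function.update]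
      · rintro ⟨s, hs, w, rfl⟩
        refine ⟨Function.update s v (some (w v)), ⟨s, hs, w v, rfl⟩, w, ?_⟩
        funext i
        by_cases hivs : i ∈ vs
        · simp [hivs, List.mem_cons]
        · by_cases hiv : i = v
          · subst hiv
            simp [hivs, Function.update]
          · simp [hivs, hiv, List.mem_cons, Function.update]

end Generic
section Generic2
variable {L : FirstOrder.Language.{u, v}} {M : Type w} [L.Structure M]

lemma exsSatE (l : List ℕ) (φ : TF L) (X : Set (ℕ → Option M))
    (h : strictSat M X (exs l φ)) :
    ∃ g : (ℕ → Option M) → (ℕ → Option M),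
      (∀ s v, v ∉ l → g s v = s v) ∧ (∀ s v, v ∈ l → ∃ m : M, g s v = some m) ∧
      strictSat M (g '' X) φ := by
  induction l generalizing X with
  | nil =>
      exact ⟨id, fun _ _ _ => rfl, fun s v hv => absurd hv List.not_mem_nil,
        by rwa [Set.image_id]⟩
  | cons v vs ih =>
      obtain ⟨F, hF⟩ := h
      obtain ⟨g', h1, h2, h3⟩ := ih _ hF
      refine ⟨fun s => g' (Function.update s v (some (F s))), ?_, ?_, ?_⟩
      · intro s u hu
        show g' (Function.update s v (some (F s))) u = s u
        rw [h1 _ u (fun h => hu (List.mem_cons_of_mem _ h))]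
        have : u ≠ v := fun h => hu (h ▸ List.mem_cons_self)
        simp [Function.update, this]
      · intro s u hu
        by_cases huvs : u ∈ vs
        · exact h2 _ u huvs
        · have : u = v := by
            rcases List.mem_cons.1 hu with h | h
            · exact h
            · exact absurd h huvs
          subst this
          show ∃ m, g' (Function.update s u (some (F s))) u = some m
          rw [h1 _ u huvs]
          exact ⟨F s, by simp [Function.update]⟩
      · rwa [← Set.image_image g']

lemma exsSatI (l : List ℕ) (φ : TF L) (X : Set (ℕ → Option M))
    (W : (ℕ → Option M) → ℕ → M)
    (hW : ∀ s v m, v ∈ l → W (Function.update s v (some m)) = W s)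
    (h : strictSat M ((fun s => fun i => if i ∈ l then some (W s i) else s i) '' X) φ) :
    strictSat M X (exs l φ) := by
  classical
  induction l generalizing X with
  | nil =>
      show strictSat M X φ
      have : (fun (s : ℕ → Option M) => fun i => if i ∈ ([] : List ℕ) then some (W s i) else s i) = id := by
        funext s i; simp
      rwa [this, Set.image_id] at h
  | cons v vs ih =>
      refine ⟨fun s => W s v, ?_⟩
      apply ih _ (fun s u m hu => hW s u m (List.mem_cons_of_mem _ hu))
      have heq : (fun s => fun i => if i ∈ vs then some (W s i) else s i) ''
            ((fun s => Function.update s v (some (W s v))) '' X)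
          = (fun s => fun i => if i ∈ v :: vs then some (W s i) else s i) '' X := by
        rw [Set.image_image]
        apply Set.image_congr
        intro s _
        funext i
        have hWs : W (Function.update s v (some (W s v))) = W s :=
          hW s v (W s v) (List.mem_cons_self)
        by_cases hivs : i ∈ vs
        · simp [hivs, List.mem_cons, hWs]
        · by_cases hiv : i = v
          · subst hiv; simp [hivs, Function.update, hWs]
          · simp [hivs, hiv, List.mem_cons, Function.update]
      rwa [heq]

lemma boundVars_alls (l : List ℕ) (φ : TF L) :
    boundVars (alls l φ) = l ++ boundVars φ := by
  induction l with
  | nil => rfl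
  | cons v vs ih => simp [alls, boundVars, ih]

lemma boundVars_exs (l : List ℕ) (φ : TF L) :
    boundVars (exs l φ) = l ++ boundVars φ := by
  induction l with
  | nil => rfl
  | cons v vs ih => simp [exs, boundVars, ih]

lemma uCount_alls (l : List ℕ) (φ : TF L) :
    uCount (alls l φ) = l.length + uCount φ := by
  induction l with
  | nil => simp [alls]
  | cons v vs ih => simp [alls, uCount, ih]; omega

lemma uCount_exs (l : List ℕ) (φ : TF L) :
    uCount (exs l φ) = uCount φ := by
  induction l with
  | nil => rfl
  | cons v vs ih => simp [exs, uCount, ih]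

lemma hasDep_alls (l : List ℕ) (φ : TF L) : hasDep (alls l φ) ↔ hasDep φ := by
  induction l with
  | nil => rfl
  | cons v vs ih => simpa [alls, hasDep] using ih

lemma hasDep_exs (l : List ℕ) (φ : TF L) : hasDep (exs l φ) ↔ hasDep φ := by
  induction l with
  | nil => rfl
  | cons v vs ih => simpa [exs, hasDep] using ih

lemma hasInc_alls (l : List ℕ) (φ : TF L) : hasInc (alls l φ) ↔ hasInc φ := by
  induction l with
  | nil => rfl
  | cons v vs ih => simpa [alls, hasInc] using ih

lemma hasInc_exs (l : List ℕ) (φ : TF L) : hasInc (exs l φ) ↔ hasInc φ := by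
  induction l with
  | nil => rfl
  | cons v vs ih => simpa [exs, hasInc] using ih

lemma freeVars_alls (l : List ℕ) (φ : TF L) :
    freeVars (alls l φ) = freeVars φ \ {x | x ∈ l} := by
  induction l with
  | nil => simp [alls]
  | cons v vs ih =>
      show freeVars (alls vs φ) \ {v} = _
      rw [ih]
      ext x
      simp only [Set.mem_diff, Set.mem_setOf_eq, Set.mem_singleton_iff, List.mem_cons]
      tauto

lemma freeVars_exs (l : List ℕ) (φ : TF L) :
    freeVars (exs l φ) = freeVars φ \ {x | x ∈ l} := by
  induction l with
  | nil => simp [exs]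
  | cons v vs ih =>
      show freeVars (exs vs φ) \ {v} = _
      rw [ih]
      ext x
      simp only [Set.mem_diff, Set.mem_setOf_eq, Set.mem_singleton_iff, List.mem_cons]
      tauto

lemma hasDep_foldr_and (l : List (TF L)) (b : TF L) :
    hasDep (l.foldr .and b) ↔ (∃ ψ ∈ l, hasDep ψ) ∨ hasDep b := by
  induction l with
  | nil => simp
  | cons a l ih =>
      show hasDep a ∨ _ ↔ _
      rw [ih]; simp only [List.mem_cons]; constructor
      · rintro (h | ⟨ψ, hψ, h⟩ | h)
        · exact Or.inl ⟨a, Or.inl rfl, h⟩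
        · exact Or.inl ⟨ψ, Or.inr hψ, h⟩
        · exact Or.inr h
      · rintro (⟨ψ, (rfl | hψ), h⟩ | h)
        · exact Or.inl h
        · exact Or.inr (Or.inl ⟨ψ, hψ, h⟩)
        · exact Or.inr (Or.inr h)

lemma hasInc_foldr_and (l : List (TF L)) (b : TF L) :
    hasInc (l.foldr .and b) ↔ (∃ ψ ∈ l, hasInc ψ) ∨ hasInc b := by
  induction l with
  | nil => simp
  | cons a l ih =>
      show hasInc a ∨ _ ↔ _
      rw [ih]; simp only [List.mem_cons]; constructor
      · rintro (h | ⟨ψ, hψ, h⟩ | h)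
        · exact Or.inl ⟨a, Or.inl rfl, h⟩
        · exact Or.inl ⟨ψ, Or.inr hψ, h⟩
        · exact Or.inr h
      · rintro (⟨ψ, (rfl | hψ), h⟩ | h)
        · exact Or.inl h
        · exact Or.inr (Or.inl ⟨ψ, hψ, h⟩)
        · exact Or.inr (Or.inr h)

lemma uCount_foldr_and (l : List (TF L)) (b : TF L) (hl : ∀ ψ ∈ l, uCount ψ = 0) :
    uCount (l.foldr .and b) = uCount b := by
  induction l with
  | nil => rfl
  | cons a l ih =>
      show uCount a + _ = _
      rw [hl a (List.mem_cons_self), ih (fun ψ hψ => hl ψ (List.mem_cons_of_mem _ hψ))]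
      omega

lemma boundVars_foldr_and (l : List (TF L)) (b : TF L)
    (hl : ∀ ψ ∈ l, boundVars ψ = []) (hb : boundVars b = []) :
    boundVars (l.foldr .and b) = [] := by
  induction l with
  | nil => exact hb
  | cons a l ih =>
      show boundVars a ++ _ = []
      rw [hl a (List.mem_cons_self), ih (fun ψ hψ => hl ψ (List.mem_cons_of_mem _ hψ))]
      rfl

lemma freeVars_foldr_and_subset (l : List (TF L)) (b : TF L) (S : Set ℕ)
    (hl : ∀ ψ ∈ l, freeVars ψ ⊆ S) (hb : freeVars b ⊆ S) :
    freeVars (l.foldr .and b) ⊆ S := by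
  induction l with
  | nil => exact hb
  | cons a l ih =>
      show freeVars a ∪ _ ⊆ S
      exact Set.union_subset (hl a (List.mem_cons_self))
        (ih (fun ψ hψ => hl ψ (List.mem_cons_of_mem _ hψ)))

lemma freeVars_foldr_or_subset (l : List (TF L)) (b : TF L) (S : Set ℕ)
    (hl : ∀ ψ ∈ l, freeVars ψ ⊆ S) (hb : freeVars b ⊆ S) :
    freeVars (l.foldr .or b) ⊆ S := by
  induction l with
  | nil => exact hb
  | cons a l ih =>
      show freeVars a ∪ _ ⊆ S
      exact Set.union_subset (hl a (List.mem_cons_self))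
        (ih (fun ψ hψ => hl ψ (List.mem_cons_of_mem _ hψ)))

lemma isFO_foldr_or (l : List (TF L)) (b : TF L) (hl : ∀ ψ ∈ l, isFO ψ) (hb : isFO b) :
    isFO (l.foldr .or b) := by
  induction l with
  | nil => exact hb
  | cons a l ih =>
      exact ⟨hl a (List.mem_cons_self), ih (fun ψ hψ => hl ψ (List.mem_cons_of_mem _ hψ))⟩

lemma quantFree_foldr_or (l : List (TF L)) (b : TF L) (hl : ∀ ψ ∈ l, quantFree ψ)
    (hb : quantFree b) : quantFree (l.foldr .or b) := by
  induction l with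
  | nil => exact hb
  | cons a l ih =>
      exact ⟨hl a (List.mem_cons_self), ih (fun ψ hψ => hl ψ (List.mem_cons_of_mem _ hψ))⟩

end Generic2
section Terms
variable {L : FirstOrder.Language.{u, v}} {M : Type w} [L.Structure M]

lemma oreal_func_some {s : ℕ → Option M} {m : ℕ} {g : L.Functions m} {ts : Fin m → L.Term ℕ}
    {v : Fin m → M} (h : ∀ i, oreal s (ts i) = some (v i)) :
    oreal s (.func g ts) = some (funMap g v) := by
  have hs : ∀ i, (oreal s (ts i)).isSome := fun i => by rw [h i]; rfl
  rw [oreal, dif_pos hs]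
  congr 1
  apply congrArg
  funext i
  simp [h i]

lemma oreal_isSome_func {s : ℕ → Option M} {m : ℕ} {g : L.Functions m} {ts : Fin m → L.Term ℕ} :
    (oreal s (.func g ts)).isSome ↔ ∀ i, (oreal s (ts i)).isSome := by
  rw [oreal]
  split_ifs with h
  · simpa using h
  · simpa using h

lemma oreal_func_congr {s s' : ℕ → Option M} {m : ℕ} {g : L.Functions m}
    {ts us : Fin m → L.Term ℕ} (h : ∀ i, oreal s (ts i) = oreal s' (us i)) :
    oreal s (.func g ts) = oreal s' (.func g us) := by
  by_cases hd : ∀ i, (oreal s (ts i)).isSome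
  · have hv : ∀ i, oreal s (ts i) = some ((oreal s (ts i)).get (hd i)) :=
      fun i => (Option.some_get (hd i)).symm
    rw [oreal_func_some hv, oreal_func_some (v := fun i => (oreal s (ts i)).get (hd i))
      (fun i => (h i).symm.trans (hv i))]
  · rw [oreal, dif_neg hd, oreal, dif_neg]
    intro hd'
    exact hd fun i => by rw [h i]; exact hd' i

lemma oreal_relabel (s : ℕ → Option M) (σ : ℕ → ℕ) (t : L.Term ℕ) :
    oreal s (t.relabel σ) = oreal (s ∘ σ) t := by
  induction t with
  | var n => rfl
  | func g ts ih =>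
      show oreal s (.func g fun i => (ts i).relabel σ) = _
      exact oreal_func_congr fun i => ih i

open Classical in
noncomputable def idxOf {α : Type*} : List α → α → ℕ
  | [], _ => 0
  | b :: l, a => if a = b then 0 else idxOf l a + 1

lemma idxOf_lt_length {α : Type*} {l : List α} {a : α} (h : a ∈ l) :
    idxOf l a < l.length := by
  classical
  induction l with
  | nil => simp at h
  | cons b l ih =>
      rw [idxOf]
      split_ifs with hab
      · simp
      · have : a ∈ l := by
          rcases List.mem_cons.1 h with h' | h'
          · exact absurd h' hab
          · exact h'
        simpa using ih this

lemma getD_idxOf {α : Type*} {l : List α} {a : α} (h : a ∈ l) (d : α) :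
    l.getD (idxOf l a) d = a := by
  classical
  induction l with
  | nil => simp at h
  | cons b l ih =>
      rw [idxOf]
      split_ifs with hab
      · simpa using hab.symm
      · have : a ∈ l := by
          rcases List.mem_cons.1 h with h' | h'
          · exact absurd h' hab
          · exact h'
        simpa using ih this

lemma idxOf_inj {α : Type*} {l : List α} {a b : α} (ha : a ∈ l) (hb : b ∈ l)
    (h : idxOf l a = idxOf l b) : a = b := by
  classical
  have := getD_idxOf ha a
  rw [h, getD_idxOf hb a] at this
  exact this.symm

end Terms

section Sub
variable {L : FirstOrder.Language.{u, v}} {F : Type} {ar : F → ℕ}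

/-- all `efunc`-subterms of an extended term -/
def esub : ETerm L F ar → List (ETerm L F ar)
  | .var _ => []
  | .func _ ts => (List.ofFn fun i => esub (ts i)).flatten
  | .efunc f ts => .efunc f ts :: (List.ofFn fun i => esub (ts i)).flatten

/-- all `efunc`-subterms of an extended quantifier-free formula -/
def subF : EQF L F ar → List (ETerm L F ar)
  | .rel _ ts => (List.ofFn fun i => esub (ts i)).flatten
  | .nrel _ ts => (List.ofFn fun i => esub (ts i)).flatten
  | .teq t u => esub t ++ esub u
  | .tne t u => esub t ++ esub u
  | .and φ ψ => subF φ ++ subF ψ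
  | .or φ ψ => subF φ ++ subF ψ

lemma mem_esub_arg {m : ℕ} {ts : Fin m → ETerm L F ar} {g : L.Functions m} {a : ETerm L F ar}
    (i : Fin m) (h : a ∈ esub (ts i)) : a ∈ esub (.func g ts) := by
  rw [esub, List.mem_flatten]
  exact ⟨esub (ts i), List.mem_ofFn.2 ⟨i, rfl⟩, h⟩

lemma mem_esub_earg {f : F} {ts : Fin (ar f) → ETerm L F ar} {a : ETerm L F ar}
    (i : Fin (ar f)) (h : a ∈ esub (ts i)) : a ∈ esub (.efunc f ts) := by
  rw [esub]
  exact List.mem_cons_of_mem _ (List.mem_flatten.2 ⟨esub (ts i), List.mem_ofFn.2 ⟨i, rfl⟩, h⟩)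

lemma esub_trans {t a : ETerm L F ar} (h : a ∈ esub t) : ∀ x ∈ esub a, x ∈ esub t := by
  induction t with
  | var n => simp [esub] at h
  | func g ts ih =>
      rw [esub, List.mem_flatten] at h
      obtain ⟨l, hl, hal⟩ := h
      obtain ⟨i, rfl⟩ := List.mem_ofFn.1 hl
      exact fun x hx => mem_esub_arg i (ih i hal x hx)
  | efunc f ts ih =>
      rw [esub, List.mem_cons] at h
      rcases h with rfl | h
      · exact fun x hx => hx
      · rw [List.mem_flatten] at h
        obtain ⟨l, hl, hal⟩ := h
        obtain ⟨i, rfl⟩ := List.mem_ofFn.1 hl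
        exact fun x hx => mem_esub_earg i (ih i hal x hx)

lemma esub_shape {t a : ETerm L F ar} (h : a ∈ esub t) :
    ∃ (f : F) (ts : Fin (ar f) → ETerm L F ar), a = .efunc f ts := by
  induction t with
  | var n => simp [esub] at h
  | func g ts ih =>
      rw [esub, List.mem_flatten] at h
      obtain ⟨l, hl, hal⟩ := h
      obtain ⟨i, rfl⟩ := List.mem_ofFn.1 hl
      exact ih i hal
  | efunc f ts ih =>
      rw [esub, List.mem_cons] at h
      rcases h with rfl | h
      · exact ⟨f, ts, rfl⟩
      · rw [List.mem_flatten] at h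
        obtain ⟨l, hl, hal⟩ := h
        obtain ⟨i, rfl⟩ := List.mem_ofFn.1 hl
        exact ih i hal

lemma esub_varsLT {r : ℕ} {t a : ETerm L F ar} (ht : t.varsLT r) (h : a ∈ esub t) :
    a.varsLT r := by
  induction t with
  | var n => simp [esub] at h
  | func g ts ih =>
      rw [esub, List.mem_flatten] at h
      obtain ⟨l, hl, hal⟩ := h
      obtain ⟨i, rfl⟩ := List.mem_ofFn.1 hl
      exact ih i (ht i) hal
  | efunc f ts ih =>
      rw [esub, List.mem_cons] at h
      rcases h with rfl | h
      · exact ht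
      · rw [List.mem_flatten] at h
        obtain ⟨l, hl, hal⟩ := h
        obtain ⟨i, rfl⟩ := List.mem_ofFn.1 hl
        exact ih i (ht i) hal

lemma subF_trans {ψ : EQF L F ar} {a : ETerm L F ar} (h : a ∈ subF ψ) :
    ∀ x ∈ esub a, x ∈ subF ψ := by
  induction ψ with
  | rel R ts =>
      rw [subF, List.mem_flatten] at h
      obtain ⟨l, hl, hal⟩ := h
      obtain ⟨i, rfl⟩ := List.mem_ofFn.1 hl
      intro x hx
      exact List.mem_flatten.2 ⟨esub (ts i), List.mem_ofFn.2 ⟨i, rfl⟩, esub_trans hal x hx⟩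
  | nrel R ts =>
      rw [subF, List.mem_flatten] at h
      obtain ⟨l, hl, hal⟩ := h
      obtain ⟨i, rfl⟩ := List.mem_ofFn.1 hl
      intro x hx
      exact List.mem_flatten.2 ⟨esub (ts i), List.mem_ofFn.2 ⟨i, rfl⟩, esub_trans hal x hx⟩
  | teq t u =>
      rcases List.mem_append.1 h with h | h
      · exact fun x hx => List.mem_append.2 (Or.inl (esub_trans h x hx))
      · exact fun x hx => List.mem_append.2 (Or.inr (esub_trans h x hx))
  | tne t u =>
      rcases List.mem_append.1 h with h | h
      · exact fun x hx => List.mem_append.2 (Or.inl (esub_trans h x hx))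
      · exact fun x hx => List.mem_append.2 (Or.inr (esub_trans h x hx))
  | and φ χ ihφ ihχ =>
      rcases List.mem_append.1 h with h | h
      · exact fun x hx => List.mem_append.2 (Or.inl (ihφ h x hx))
      · exact fun x hx => List.mem_append.2 (Or.inr (ihχ h x hx))
  | or φ χ ihφ ihχ =>
      rcases List.mem_append.1 h with h | h
      · exact fun x hx => List.mem_append.2 (Or.inl (ihφ h x hx))
      · exact fun x hx => List.mem_append.2 (Or.inr (ihχ h x hx))

lemma subF_shape {ψ : EQF L F ar} {a : ETerm L F ar} (h : a ∈ subF ψ) :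
    ∃ (f : F) (ts : Fin (ar f) → ETerm L F ar), a = .efunc f ts := by
  induction ψ with
  | rel R ts =>
      rw [subF, List.mem_flatten] at h
      obtain ⟨l, hl, hal⟩ := h
      obtain ⟨i, rfl⟩ := List.mem_ofFn.1 hl
      exact esub_shape hal
  | nrel R ts =>
      rw [subF, List.mem_flatten] at h
      obtain ⟨l, hl, hal⟩ := h
      obtain ⟨i, rfl⟩ := List.mem_ofFn.1 hl
      exact esub_shape hal
  | teq t u => rcases List.mem_append.1 h with h | h <;> exact esub_shape h
  | tne t u => rcases List.mem_append.1 h with h | h <;> exact esub_shape h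
  | and φ χ ihφ ihχ => rcases List.mem_append.1 h with h | h; exacts [ihφ h, ihχ h]
  | or φ χ ihφ ihχ => rcases List.mem_append.1 h with h | h; exacts [ihφ h, ihχ h]

lemma subF_varsLT {r : ℕ} {ψ : EQF L F ar} {a : ETerm L F ar} (hψ : ψ.varsLT r)
    (h : a ∈ subF ψ) : a.varsLT r := by
  induction ψ with
  | rel R ts =>
      rw [subF, List.mem_flatten] at h
      obtain ⟨l, hl, hal⟩ := h
      obtain ⟨i, rfl⟩ := List.mem_ofFn.1 hl
      exact esub_varsLT (hψ i) hal
  | nrel R ts =>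
      rw [subF, List.mem_flatten] at h
      obtain ⟨l, hl, hal⟩ := h
      obtain ⟨i, rfl⟩ := List.mem_ofFn.1 hl
      exact esub_varsLT (hψ i) hal
  | teq t u =>
      rcases List.mem_append.1 h with h | h
      exacts [esub_varsLT hψ.1 h, esub_varsLT hψ.2 h]
  | tne t u =>
      rcases List.mem_append.1 h with h | h
      exacts [esub_varsLT hψ.1 h, esub_varsLT hψ.2 h]
  | and φ χ ihφ ihχ =>
      rcases List.mem_append.1 h with h | h; exacts [ihφ hψ.1 h, ihχ hψ.2 h]
  | or φ χ ihφ ihχ =>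
      rcases List.mem_append.1 h with h | h; exacts [ihφ hψ.1 h, ihχ hψ.2 h]

end Sub
section Translate
variable {L : FirstOrder.Language.{u, v}} {F : Type} {ar : F → ℕ}

/-- variable renaming for the second ("primed") copy -/
def sigv (r : ℕ) (v : ℕ) : ℕ := if v < r then r + v else v + 1

/-- translation of an extended term into an `L`-term, replacing each `efunc`-subterm
by its associated variable -/
noncomputable def compile (r : ℕ) (E : List (ETerm L F ar)) : ETerm L F ar → L.Term ℕ
  | .var i => .var i
  | .func g ts => .func g fun i => compile r E (ts i)
  | .efunc f ts => .var (2 * r + 2 * idxOf E (.efunc f ts))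

noncomputable def compileF (r : ℕ) (E : List (ETerm L F ar)) : EQF L F ar → TF L
  | .rel R ts => .rel R fun i => compile r E (ts i)
  | .nrel R ts => .nrel R fun i => compile r E (ts i)
  | .teq t u => .teq (compile r E t) (compile r E u)
  | .tne t u => .tne (compile r E t) (compile r E u)
  | .and φ ψ => .and (compileF r E φ) (compileF r E ψ)
  | .or φ ψ => .or (compileF r E φ) (compileF r E ψ)

open Classical in
/-- the consistency formula for a pair of `efunc`-terms -/
noncomputable def consF (r : ℕ) (E : List (ETerm L F ar)) :
    ETerm L F ar → ETerm L F ar → TF L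
  | .efunc f ts, .efunc f' ts' =>
      if h : f = f' then
        (List.ofFn fun i : Fin (ar f) =>
            TF.tne (compile r E (ts i))
              ((compile r E (ts' (Fin.cast (congrArg ar h) i))).relabel (sigv r))).foldr
          .or
          (.teq (.var (2 * r + 2 * idxOf E (.efunc f ts)))
            (.var (2 * r + 2 * idxOf E (.efunc f' ts') + 1)))
      else
        .teq (.var (2 * r + 2 * idxOf E (.efunc f ts)))
          (.var (2 * r + 2 * idxOf E (.efunc f ts)))
  | e, _ => .teq (.var (2 * r + 2 * idxOf E e)) (.var (2 * r + 2 * idxOf E e))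

variable (r : ℕ) (E : List (ETerm L F ar))

/-- the dependence atoms (encoded as independence atoms) -/
noncomputable def depAtoms : List (TF L) :=
  ((List.range E.length).map fun j =>
    TF.indep (List.range r) [2 * r + 2 * j] [2 * r + 2 * j]) ++
  ((List.range E.length).map fun j =>
    TF.indep ((List.range r).map (r + ·)) [2 * r + 2 * j + 1] [2 * r + 2 * j + 1])

noncomputable def consAtoms : List (TF L) :=
  E.flatMap fun e₁ => E.map fun e₂ => consF r E e₁ e₂

noncomputable def theMatrix (θ : EQF L F ar) : TF L :=
  (depAtoms r E ++ consAtoms r E).foldr .and (compileF r E θ)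

noncomputable def theSentence (θ : EQF L F ar) : TF L :=
  alls (List.range (2 * r))
    (exs ((List.range (2 * E.length)).map (2 * r + ·)) (theMatrix r E θ))

end Translate
section Static
variable {L : FirstOrder.Language.{u, v}} {F : Type} {ar : F → ℕ}

open Classical in
lemma consF_eq (r : ℕ) (E : List (ETerm L F ar)) (f f' : F) (ts : Fin (ar f) → ETerm L F ar)
    (ts' : Fin (ar f') → ETerm L F ar) :
    consF r E (.efunc f ts) (.efunc f' ts') =
      if h : f = f' then
        (List.ofFn fun i : Fin (ar f) =>
            TF.tne (compile r E (ts i))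
              ((compile r E (ts' (Fin.cast (congrArg ar h) i))).relabel (sigv r))).foldr
          .or
          (.teq (.var (2 * r + 2 * idxOf E (.efunc f ts)))
            (.var (2 * r + 2 * idxOf E (.efunc f' ts') + 1)))
      else
        .teq (.var (2 * r + 2 * idxOf E (.efunc f ts)))
          (.var (2 * r + 2 * idxOf E (.efunc f ts))) := by
  rw [consF]

lemma uCount_foldr_or (l : List (TF L)) (b : TF L) (hl : ∀ ψ ∈ l, uCount ψ = 0) :
    uCount (l.foldr .or b) = uCount b := by
  induction l with
  | nil => rfl
  | cons a l ih =>
      show uCount a + _ = _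
      rw [hl a (List.mem_cons_self), ih (fun ψ hψ => hl ψ (List.mem_cons_of_mem _ hψ))]
      omega

lemma boundVars_foldr_or (l : List (TF L)) (b : TF L)
    (hl : ∀ ψ ∈ l, boundVars ψ = []) (hb : boundVars b = []) :
    boundVars (l.foldr .or b) = [] := by
  induction l with
  | nil => exact hb
  | cons a l ih =>
      show boundVars a ++ _ = []
      rw [hl a (List.mem_cons_self), ih (fun ψ hψ => hl ψ (List.mem_cons_of_mem _ hψ))]
      rfl

lemma hasDep_foldr_or (l : List (TF L)) (b : TF L) :
    hasDep (l.foldr .or b) ↔ (∃ ψ ∈ l, hasDep ψ) ∨ hasDep b := by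
  induction l with
  | nil => simp
  | cons a l ih =>
      show hasDep a ∨ _ ↔ _
      rw [ih]; simp only [List.mem_cons]; constructor
      · rintro (h | ⟨ψ, hψ, h⟩ | h)
        · exact Or.inl ⟨a, Or.inl rfl, h⟩
        · exact Or.inl ⟨ψ, Or.inr hψ, h⟩
        · exact Or.inr h
      · rintro (⟨ψ, (rfl | hψ), h⟩ | h)
        · exact Or.inl h
        · exact Or.inr (Or.inl ⟨ψ, hψ, h⟩)
        · exact Or.inr (Or.inr h)

lemma hasInc_foldr_or (l : List (TF L)) (b : TF L) :
    hasInc (l.foldr .or b) ↔ (∃ ψ ∈ l, hasInc ψ) ∨ hasInc b := by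
  induction l with
  | nil => simp
  | cons a l ih =>
      show hasInc a ∨ _ ↔ _
      rw [ih]; simp only [List.mem_cons]; constructor
      · rintro (h | ⟨ψ, hψ, h⟩ | h)
        · exact Or.inl ⟨a, Or.inl rfl, h⟩
        · exact Or.inl ⟨ψ, Or.inr hψ, h⟩
        · exact Or.inr h
      · rintro (⟨ψ, (rfl | hψ), h⟩ | h)
        · exact Or.inl h
        · exact Or.inr (Or.inl ⟨ψ, hψ, h⟩)
        · exact Or.inr (Or.inr h)

variable {r : ℕ} {E : List (ETerm L F ar)}

lemma mem_esub_self (f : F) (ts : Fin (ar f) → ETerm L F ar) :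
    ETerm.efunc f ts ∈ esub (.efunc f ts) := by
  rw [esub]; exact List.mem_cons_self

lemma tvars_relabel (σ : ℕ → ℕ) (t : L.Term ℕ) : tvars (t.relabel σ) = σ '' tvars t := by
  induction t with
  | var n => simp [Term.relabel, tvars]
  | func g ts ih =>
      show (⋃ i, tvars ((ts i).relabel σ)) = _
      rw [tvars, Set.image_iUnion]
      exact Set.iUnion_congr ih

lemma tvars_compile {t : ETerm L F ar} (ht : t.varsLT r) (hE : ∀ x ∈ esub t, x ∈ E) :
    ∀ v ∈ tvars (compile r E t), v < r ∨ ∃ j, j < E.length ∧ v = 2 * r + 2 * j := by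
  induction t with
  | var i =>
      intro v hv
      rw [compile] at hv
      rcases hv with rfl
      exact Or.inl ht
  | func g ts ih =>
      intro v hv
      rw [compile, tvars] at hv
      obtain ⟨i, hvi⟩ := Set.mem_iUnion.1 hv
      exact ih i (ht i) (fun x hx => hE x (mem_esub_arg i hx)) v hvi
  | efunc f ts ih =>
      intro v hv
      rw [compile] at hv
      rcases hv with rfl
      exact Or.inr ⟨idxOf E (.efunc f ts),
        idxOf_lt_length (hE _ (mem_esub_self f ts)), rfl⟩

lemma tvars_compile_bound {t : ETerm L F ar} (ht : t.varsLT r) (hE : ∀ x ∈ esub t, x ∈ E) :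
    tvars (compile r E t) ⊆ {v | v < 2 * r + 2 * E.length} := by
  intro v hv
  rcases tvars_compile ht hE v hv with h | ⟨j, hj, rfl⟩ <;> simp only [Set.mem_setOf_eq] <;> omega

lemma tvars_compile_relabel_bound {t : ETerm L F ar} (ht : t.varsLT r)
    (hE : ∀ x ∈ esub t, x ∈ E) :
    tvars ((compile r E t).relabel (sigv r)) ⊆ {v | v < 2 * r + 2 * E.length} := by
  rw [tvars_relabel]
  rintro v ⟨u, hu, rfl⟩
  rcases tvars_compile ht hE u hu with h | ⟨j, hj, rfl⟩ <;>
    simp only [sigv, Set.mem_setOf_eq] <;> split_ifs <;> omega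

lemma freeVars_compileF {θ : EQF L F ar} (hθ : θ.varsLT r) (hE : ∀ x ∈ subF θ, x ∈ E) :
    freeVars (compileF r E θ) ⊆ {v | v < 2 * r + 2 * E.length} := by
  induction θ with
  | rel R ts =>
      show (⋃ i, tvars (compile r E (ts i))) ⊆ _
      refine Set.iUnion_subset fun i => tvars_compile_bound (hθ i) fun x hx => hE x ?_
      exact List.mem_flatten.2 ⟨esub (ts i), List.mem_ofFn.2 ⟨i, rfl⟩, hx⟩
  | nrel R ts =>
      show (⋃ i, tvars (compile r E (ts i))) ⊆ _
      refine Set.iUnion_subset fun i => tvars_compile_bound (hθ i) fun x hx => hE x ?_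
      exact List.mem_flatten.2 ⟨esub (ts i), List.mem_ofFn.2 ⟨i, rfl⟩, hx⟩
  | teq t u =>
      exact Set.union_subset
        (tvars_compile_bound hθ.1 fun x hx => hE x (List.mem_append.2 (Or.inl hx)))
        (tvars_compile_bound hθ.2 fun x hx => hE x (List.mem_append.2 (Or.inr hx)))
  | tne t u =>
      exact Set.union_subset
        (tvars_compile_bound hθ.1 fun x hx => hE x (List.mem_append.2 (Or.inl hx)))
        (tvars_compile_bound hθ.2 fun x hx => hE x (List.mem_append.2 (Or.inr hx)))
  | and φ ψ ihφ ihψ =>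
      exact Set.union_subset (ihφ hθ.1 fun x hx => hE x (List.mem_append.2 (Or.inl hx)))
        (ihψ hθ.2 fun x hx => hE x (List.mem_append.2 (Or.inr hx)))
  | or φ ψ ihφ ihψ =>
      exact Set.union_subset (ihφ hθ.1 fun x hx => hE x (List.mem_append.2 (Or.inl hx)))
        (ihψ hθ.2 fun x hx => hE x (List.mem_append.2 (Or.inr hx)))

lemma freeVars_consF {e₁ e₂ : ETerm L F ar} (h₁ : e₁ ∈ E) (h₂ : e₂ ∈ E)
    (hv₁ : e₁.varsLT r) (hv₂ : e₂.varsLT r)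
    (hc : ∀ x ∈ E, ∀ y ∈ esub x, y ∈ E) :
    freeVars (consF r E e₁ e₂) ⊆ {v | v < 2 * r + 2 * E.length} := by
  classical
  have hidx₁ := idxOf_lt_length h₁
  have hidx₂ := idxOf_lt_length h₂
  have hteq : freeVars (TF.teq (L := L) (.var (2 * r + 2 * idxOf E e₁))
      (.var (2 * r + 2 * idxOf E e₁))) ⊆ {v | v < 2 * r + 2 * E.length} := by
    show tvars _ ∪ tvars _ ⊆ _
    rintro v hv
    rcases hv with hv | hv <;> rcases hv with rfl <;> simp only [Set.mem_setOf_eq] <;> omega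
  cases e₁ with
  | var i => exact hteq
  | func g ts => exact hteq
  | efunc f ts =>
      cases e₂ with
      | var i => exact hteq
      | func g ts' => exact hteq
      | efunc f' ts' =>
          rw [consF_eq]
          split_ifs with hff
          · apply freeVars_foldr_or_subset
            · intro ψ hψ
              obtain ⟨i, rfl⟩ := List.mem_ofFn.1 hψ
              apply Set.union_subset
              · exact tvars_compile_bound (hv₁ i)
                  (fun x hx => hc _ h₁ x (mem_esub_earg i hx))
              · exact tvars_compile_relabel_bound (hv₂ _)
                  (fun x hx => hc _ h₂ x (mem_esub_earg _ hx))
            · rintro v (hv | hv) <;> rcases hv with rfl <;>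
                simp only [Set.mem_setOf_eq] <;> omega
          · exact hteq

lemma uCount_compileF (θ : EQF L F ar) : uCount (compileF r E θ) = 0 := by
  induction θ <;> simp [compileF, uCount, *]

lemma boundVars_compileF (θ : EQF L F ar) : boundVars (compileF r E θ) = [] := by
  induction θ <;> simp [compileF, boundVars, *]

lemma not_hasDep_compileF (θ : EQF L F ar) : ¬ hasDep (compileF r E θ) := by
  induction θ <;> simp [compileF, hasDep, *]

lemma not_hasInc_compileF (θ : EQF L F ar) : ¬ hasInc (compileF r E θ) := by
  induction θ <;> simp [compileF, hasInc, *]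

lemma isFO_compileF (θ : EQF L F ar) : isFO (compileF r E θ) := by
  induction θ <;> simp [compileF, isFO, *]

lemma quantFree_compileF (θ : EQF L F ar) : quantFree (compileF r E θ) := by
  induction θ <;> simp [compileF, quantFree, *]

lemma consF_props (e₁ e₂ : ETerm L F ar) :
    uCount (consF r E e₁ e₂) = 0 ∧ boundVars (consF r E e₁ e₂) = [] ∧
    ¬ hasDep (consF r E e₁ e₂) ∧ ¬ hasInc (consF r E e₁ e₂) ∧
    isFO (consF r E e₁ e₂) ∧ quantFree (consF r E e₁ e₂) := by
  classical
  have hteq : ∀ a b : ℕ, uCount (TF.teq (L := L) (.var a) (.var b)) = 0 ∧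
      boundVars (TF.teq (L := L) (.var a) (.var b)) = [] ∧
      ¬ hasDep (TF.teq (L := L) (.var a) (.var b)) ∧
      ¬ hasInc (TF.teq (L := L) (.var a) (.var b)) ∧
      isFO (TF.teq (L := L) (.var a) (.var b)) ∧
      quantFree (TF.teq (L := L) (.var a) (.var b)) := by
    intro a b
    exact ⟨rfl, rfl, id, id, trivial, trivial⟩
  cases e₁ with
  | var i => exact hteq _ _
  | func g ts => exact hteq _ _
  | efunc f ts =>
      cases e₂ with
      | var i => exact hteq _ _
      | func g ts' => exact hteq _ _
      | efunc f' ts' =>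
          rw [consF_eq]
          split_ifs with hff
          · refine ⟨?_, ?_, ?_, ?_, ?_, ?_⟩
            · rw [uCount_foldr_or]
              · rfl
              · intro ψ hψ
                obtain ⟨i, rfl⟩ := List.mem_ofFn.1 hψ
                rfl
            · rw [boundVars_foldr_or]
              · intro ψ hψ
                obtain ⟨i, rfl⟩ := List.mem_ofFn.1 hψ
                rfl
              · rfl
            · rw [hasDep_foldr_or]
              rintro (⟨ψ, hψ, h⟩ | h)
              · obtain ⟨i, rfl⟩ := List.mem_ofFn.1 hψ
                exact h
              · exact h
            · rw [hasInc_foldr_or]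
              rintro (⟨ψ, hψ, h⟩ | h)
              · obtain ⟨i, rfl⟩ := List.mem_ofFn.1 hψ
                exact h
              · exact h
            · apply isFO_foldr_or
              · intro ψ hψ
                obtain ⟨i, rfl⟩ := List.mem_ofFn.1 hψ
                trivial
              · trivial
            · apply quantFree_foldr_or
              · intro ψ hψ
                obtain ⟨i, rfl⟩ := List.mem_ofFn.1 hψ
                trivial
              · trivial
          · exact hteq _ _

end Static
section Static2
variable {L : FirstOrder.Language.{u, v}} {F : Type} {ar : F → ℕ}
variable {r : ℕ} {E : List (ETerm L F ar)} {θ : EQF L F ar}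

lemma mem_depAtoms {ψ : TF L} (h : ψ ∈ depAtoms (F := F) (ar := ar) r E) :
    (∃ j < E.length, ψ = TF.indep (List.range r) [2 * r + 2 * j] [2 * r + 2 * j]) ∨
    (∃ j < E.length, ψ = TF.indep ((List.range r).map (r + ·)) [2 * r + 2 * j + 1]
      [2 * r + 2 * j + 1]) := by
  rcases List.mem_append.1 h with h | h <;>
    obtain ⟨j, hj, rfl⟩ := List.mem_map.1 h
  · exact Or.inl ⟨j, List.mem_range.1 hj, rfl⟩
  · exact Or.inr ⟨j, List.mem_range.1 hj, rfl⟩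

lemma mem_consAtoms {ψ : TF L} (h : ψ ∈ consAtoms r E) :
    ∃ e₁ ∈ E, ∃ e₂ ∈ E, ψ = consF r E e₁ e₂ := by
  obtain ⟨e₁, he₁, h⟩ := List.mem_flatMap.1 h
  obtain ⟨e₂, he₂, rfl⟩ := List.mem_map.1 h
  exact ⟨e₁, he₁, e₂, he₂, rfl⟩

lemma theSentence_static (hθ : θ.varsLT r)
    (hc : ∀ x ∈ E, ∀ y ∈ esub x, y ∈ E)
    (hvars : ∀ e ∈ E, ETerm.varsLT r e)
    (hθE : ∀ x ∈ subF θ, x ∈ E) :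
    freeVars (theSentence r E θ) = ∅ ∧ (boundVars (theSentence r E θ)).Nodup ∧
    uCount (theSentence r E θ) = 2 * r ∧
    ¬ hasDep (theSentence r E θ) ∧ ¬ hasInc (theSentence r E θ) := by
  classical
  set N := E.length with hN
  have hfvdep : ∀ ψ ∈ depAtoms (F := F) (ar := ar) r E,
      freeVars ψ ⊆ {v | v < 2 * r + 2 * N} := by
    intro ψ hψ
    rcases mem_depAtoms hψ with ⟨j, hj, rfl⟩ | ⟨j, hj, rfl⟩ <;>
    · intro v hv
      simp only [freeVars, Set.mem_setOf_eq, List.mem_append, List.mem_cons,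
        List.not_mem_nil, or_false, List.mem_range, List.mem_map] at hv ⊢
      rcases hv with (hv | ⟨u, hu, rfl⟩ | hv) | hv <;> omega
  have hfvcons : ∀ ψ ∈ consAtoms r E, freeVars ψ ⊆ {v | v < 2 * r + 2 * N} := by
    intro ψ hψ
    obtain ⟨e₁, he₁, e₂, he₂, rfl⟩ := mem_consAtoms hψ
    exact freeVars_consF he₁ he₂ (hvars _ he₁) (hvars _ he₂) hc
  have hfvmatrix : freeVars (theMatrix r E θ) ⊆ {v | v < 2 * r + 2 * N} := by
    apply freeVars_foldr_and_subset
    · intro ψ hψ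
      rcases List.mem_append.1 hψ with h | h
      · exact hfvdep ψ h
      · exact hfvcons ψ h
    · exact freeVars_compileF hθ hθE
  have hbmatrix : boundVars (theMatrix r E θ) = [] := by
    apply boundVars_foldr_and
    · intro ψ hψ
      rcases List.mem_append.1 hψ with h | h
      · rcases mem_depAtoms h with ⟨j, hj, rfl⟩ | ⟨j, hj, rfl⟩ <;> rfl
      · obtain ⟨e₁, he₁, e₂, he₂, rfl⟩ := mem_consAtoms h
        exact (consF_props e₁ e₂).2.1
    · exact boundVars_compileF θ
  have humatrix : uCount (theMatrix r E θ) = 0 := by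
    rw [theMatrix, uCount_foldr_and _ _ ?_, uCount_compileF]
    intro ψ hψ
    rcases List.mem_append.1 hψ with h | h
    · rcases mem_depAtoms h with ⟨j, hj, rfl⟩ | ⟨j, hj, rfl⟩ <;> rfl
    · obtain ⟨e₁, he₁, e₂, he₂, rfl⟩ := mem_consAtoms h
      exact (consF_props e₁ e₂).1
  refine ⟨?_, ?_, ?_, ?_, ?_⟩
  · rw [theSentence, freeVars_alls, freeVars_exs]
    ext v
    simp only [Set.mem_diff, Set.mem_setOf_eq, List.mem_range, List.mem_map,
      Set.mem_empty_iff_false, iff_false]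
    rintro ⟨⟨hv, hv2⟩, hv3⟩
    have := hfvmatrix hv
    simp only [Set.mem_setOf_eq] at this
    by_cases h2r : v < 2 * r
    · exact hv3 h2r
    · exact hv2 ⟨v - 2 * r, by omega, by omega⟩
  · rw [theSentence, boundVars_alls, boundVars_exs, hbmatrix, List.append_nil]
    apply List.Nodup.append List.nodup_range
    · exact List.Nodup.map (fun a b h => by omega) List.nodup_range
    · intro a ha hb
      obtain ⟨i, _, rfl⟩ := List.mem_map.1 hb
      have := List.mem_range.1 ha
      omega
  · rw [theSentence, uCount_alls, uCount_exs, humatrix, List.length_range]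
    omega
  · rw [theSentence, hasDep_alls, hasDep_exs, theMatrix, hasDep_foldr_and]
    rintro (⟨ψ, hψ, h⟩ | h)
    · rcases List.mem_append.1 hψ with hm | hm
      · rcases mem_depAtoms hm with ⟨j, hj, rfl⟩ | ⟨j, hj, rfl⟩ <;> exact h
      · obtain ⟨e₁, he₁, e₂, he₂, rfl⟩ := mem_consAtoms hm
        exact (consF_props e₁ e₂).2.2.1 h
    · exact not_hasDep_compileF θ h
  · rw [theSentence, hasInc_alls, hasInc_exs, theMatrix, hasInc_foldr_and]
    rintro (⟨ψ, hψ, h⟩ | h)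
    · rcases List.mem_append.1 hψ with hm | hm
      · rcases mem_depAtoms hm with ⟨j, hj, rfl⟩ | ⟨j, hj, rfl⟩ <;> exact h
      · obtain ⟨e₁, he₁, e₂, he₂, rfl⟩ := mem_consAtoms hm
        exact (consF_props e₁ e₂).2.2.2.1 h
    · exact not_hasInc_compileF θ h

end Static2
section Semantic
variable {L : FirstOrder.Language.{u, v}} {F : Type} {ar : F → ℕ}
variable {M : Type w} [L.Structure M]

lemma List.getD_mem' {α : Type*} {l : List α} {j : ℕ} (h : j < l.length) (d : α) :
    l.getD j d ∈ l := by
  rw [List.getD_eq_getElem l d h]; exact List.getElem_mem h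

lemma map_range_eq_iff {α : Type*} (f g : ℕ → α) (m : ℕ) :
    (List.range m).map f = (List.range m).map g ↔ ∀ i < m, f i = g i := by
  rw [List.map_inj_left]
  constructor
  · intro h i hi; exact h i (List.mem_range.2 hi)
  · intro h i hi; exact h i (List.mem_range.1 hi)

lemma realize_congr {fi : ∀ f : F, (Fin (ar f) → M) → M} {r : ℕ} {ω ω' : ℕ → M}
    (h : ∀ i < r, ω i = ω' i) : ∀ {t : ETerm L F ar}, t.varsLT r →
    t.realize fi ω = t.realize fi ω' := by
  intro t
  induction t with
  | var n => intro ht; exact h n ht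
  | func g ts ih =>
      intro ht
      show funMap g _ = funMap g _
      exact congrArg _ (funext fun i => ih i (ht i))
  | efunc f ts ih =>
      intro ht
      show fi f _ = fi f _
      exact congrArg _ (funext fun i => ih i (ht i))

lemma oreal_compile (fi : ∀ f : F, (Fin (ar f) → M) → M) {r : ℕ}
    {E : List (ETerm L F ar)} {s : ℕ → Option M} {ω : ℕ → M}
    (H1 : ∀ i < r, s i = some (ω i))
    (H2 : ∀ e ∈ E, s (2 * r + 2 * idxOf E e) = some (ETerm.realize fi ω e)) :
    ∀ {t : ETerm L F ar}, t.varsLT r → (∀ x ∈ esub t, x ∈ E) →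
      oreal s (compile r E t) = some (ETerm.realize fi ω t) := by
  intro t
  induction t with
  | var n => intro ht _; exact H1 n ht
  | func g ts ih =>
      intro ht hE
      rw [compile]
      exact oreal_func_some fun i => ih i (ht i) (fun x hx => hE x (mem_esub_arg i hx))
  | efunc f ts ih =>
      intro ht hE
      rw [compile]
      exact H2 _ (hE _ (mem_esub_self f ts))

lemma foSat_compileF (fi : ∀ f : F, (Fin (ar f) → M) → M) {r : ℕ}
    {E : List (ETerm L F ar)} {s : ℕ → Option M} {ω : ℕ → M}
    (h : ∀ t : ETerm L F ar, t.varsLT r → (∀ x ∈ esub t, x ∈ E) →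
      oreal s (compile r E t) = some (t.realize fi ω)) :
    ∀ {ψ : EQF L F ar}, ψ.varsLT r → (∀ x ∈ subF ψ, x ∈ E) →
      (foSat M s (compileF r E ψ) ↔ ψ.realize fi ω) := by
  intro ψ
  induction ψ with
  | rel R ts =>
      intro hψ hE
      have hsub : ∀ i, ∀ x ∈ esub (ts i), x ∈ E := fun i x hx =>
        hE x (List.mem_flatten.2 ⟨esub (ts i), List.mem_ofFn.2 ⟨i, rfl⟩, hx⟩)
      show (∃ v, (∀ i, oreal s (compile r E (ts i)) = some (v i)) ∧ RelMap R v) ↔ _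
      constructor
      · rintro ⟨v, hv, hR⟩
        have : v = fun i => (ts i).realize fi ω := by
          funext i
          have := (hv i).symm.trans (h (ts i) (hψ i) (hsub i))
          exact Option.some_injective _ this
        rwa [this] at hR
      · intro hR
        exact ⟨fun i => (ts i).realize fi ω, fun i => h (ts i) (hψ i) (hsub i), hR⟩
  | nrel R ts =>
      intro hψ hE
      have hsub : ∀ i, ∀ x ∈ esub (ts i), x ∈ E := fun i x hx =>
        hE x (List.mem_flatten.2 ⟨esub (ts i), List.mem_ofFn.2 ⟨i, rfl⟩, hx⟩)
      show (∃ v, (∀ i, oreal s (compile r E (ts i)) = some (v i)) ∧ ¬ RelMap R v) ↔ _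
      constructor
      · rintro ⟨v, hv, hR⟩
        have : v = fun i => (ts i).realize fi ω := by
          funext i
          have := (hv i).symm.trans (h (ts i) (hψ i) (hsub i))
          exact Option.some_injective _ this
        rwa [this] at hR
      · intro hR
        exact ⟨fun i => (ts i).realize fi ω, fun i => h (ts i) (hψ i) (hsub i), hR⟩
  | teq t u =>
      intro hψ hE
      have h1 := h t hψ.1 (fun x hx => hE x (List.mem_append.2 (Or.inl hx)))
      have h2 := h u hψ.2 (fun x hx => hE x (List.mem_append.2 (Or.inr hx)))
      show (∃ a : M, oreal s (compile r E t) = some a ∧ oreal s (compile r E u) = some a) ↔ _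
      constructor
      · rintro ⟨a, ha1, ha2⟩
        have e1 := Option.some_injective _ (ha1.symm.trans h1)
        have e2 := Option.some_injective _ (ha2.symm.trans h2)
        show t.realize fi ω = u.realize fi ω
        rw [← e1, ← e2]
      · intro hequ
        exact ⟨t.realize fi ω, h1, by rw [h2, hequ]⟩
  | tne t u =>
      intro hψ hE
      have h1 := h t hψ.1 (fun x hx => hE x (List.mem_append.2 (Or.inl hx)))
      have h2 := h u hψ.2 (fun x hx => hE x (List.mem_append.2 (Or.inr hx)))
      show (∃ a b : M, oreal s (compile r E t) = some a ∧
        oreal s (compile r E u) = some b ∧ a ≠ b) ↔ _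
      constructor
      · rintro ⟨a, b, ha, hb, hab⟩
        have e1 := Option.some_injective _ (ha.symm.trans h1)
        have e2 := Option.some_injective _ (hb.symm.trans h2)
        show t.realize fi ω ≠ u.realize fi ω
        rw [← e1, ← e2]; exact hab
      · intro hne
        exact ⟨t.realize fi ω, u.realize fi ω, h1, h2, hne⟩
  | and φ χ ihφ ihχ =>
      intro hψ hE
      have i1 := ihφ hψ.1 (fun x hx => hE x (List.mem_append.2 (Or.inl hx)))
      have i2 := ihχ hψ.2 (fun x hx => hE x (List.mem_append.2 (Or.inr hx)))
      show foSat M s _ ∧ foSat M s _ ↔ _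
      rw [i1, i2]; rfl
  | or φ χ ihφ ihχ =>
      intro hψ hE
      have i1 := ihφ hψ.1 (fun x hx => hE x (List.mem_append.2 (Or.inl hx)))
      have i2 := ihχ hψ.2 (fun x hx => hE x (List.mem_append.2 (Or.inr hx)))
      show foSat M s _ ∨ foSat M s _ ↔ _
      rw [i1, i2]; rfl

end Semantic
section Backward
variable {L : FirstOrder.Language.{u, v}} {F : Type} {ar : F → ℕ}
variable {M : Type w} [L.Structure M]

lemma mem_ysList_iff {r N i : ℕ} :
    i ∈ (List.range (2 * N)).map (2 * r + ·) ↔ 2 * r ≤ i ∧ i < 2 * r + 2 * N := by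
  simp only [List.mem_map, List.mem_range]
  constructor
  · rintro ⟨u, hu, rfl⟩; omega
  · rintro ⟨h1, h2⟩; exact ⟨i - 2 * r, by omega, by omega⟩

lemma backward (d : M) {r : ℕ} {E : List (ETerm L F ar)} {θ : EQF L F ar}
    (hθ : θ.varsLT r)
    (hc : ∀ x ∈ E, ∀ y ∈ esub x, y ∈ E)
    (hvars : ∀ e ∈ E, ETerm.varsLT r e)
    (hθE : ∀ x ∈ subF θ, x ∈ E)
    (hshape : ∀ e ∈ E, ∃ (f : F) (ts : Fin (ar f) → ETerm L F ar), e = .efunc f ts)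
    (fi : ∀ f : F, (Fin (ar f) → M) → M) (hfi : ∀ s : ℕ → M, θ.realize fi s) :
    strictSat M {emptyAssign M} (theSentence r E θ) := by
  classical
  haveI : Nonempty M := ⟨d⟩
  set dE : ETerm L F ar := .var 0 with hdE
  set W : (ℕ → Option M) → ℕ → M := fun s i =>
    if (i - 2 * r) / 2 < E.length then
      (if (i - 2 * r) % 2 = 0 then
        (E.getD ((i - 2 * r) / 2) dE).realize fi (fun q => (s q).getD d)
      else
        (E.getD ((i - 2 * r) / 2) dE).realize fi (fun q => (s (r + q)).getD d))
    else d
    with hWdef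
  rw [theSentence, strictSat_alls]
  apply exsSatI
  · -- invariance of W under updates at quantified variables
    intro s v m hv
    rw [mem_ysList_iff] at hv
    funext i
    show W _ i = W s i
    rw [hWdef]
    dsimp only
    split_ifs with h1 h2
    · apply realize_congr (r := r) _ (hvars _ (List.getD_mem' h1 dE))
      intro q hq
      have : q ≠ v := by omega
      simp [Function.update, this]
    · apply realize_congr (r := r) _ (hvars _ (List.getD_mem' h1 dE))
      intro q hq
      have : r + q ≠ v := by omega
      simp [Function.update, this]
    · rfl
  · -- satisfaction of the matrix by the canonical team
    rw [extA_eq _ List.nodup_range]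
    set ysl : List ℕ := (List.range (2 * E.length)).map (2 * r + ·) with hysl
    set G : (ℕ → M) → (ℕ → Option M) := fun w i =>
      if i ∈ ysl then some (W (fun i' => if i' ∈ List.range (2 * r) then some (w i')
        else emptyAssign M i') i)
      else if i ∈ List.range (2 * r) then some (w i) else emptyAssign M i
      with hGdef
    have hT : ((fun s => fun i => if i ∈ ysl then some (W s i) else s i) ''
        {t | ∃ s ∈ ({emptyAssign M} : Set (ℕ → Option M)), ∃ w : ℕ → M,
          t = fun i => if i ∈ List.range (2 * r) then some (w i) else s i})
        = {t | ∃ w : ℕ → M, t = G w} := by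
      ext t
      simp only [Set.mem_image, Set.mem_setOf_eq, Set.mem_singleton_iff]
      constructor
      · rintro ⟨s₁, ⟨s, rfl, w, rfl⟩, rfl⟩
        exact ⟨w, rfl⟩
      · rintro ⟨w, rfl⟩
        exact ⟨_, ⟨emptyAssign M, rfl, w, rfl⟩, rfl⟩
    rw [hT]
    -- pointwise description of team elements
    have F1 : ∀ (w : ℕ → M) (i : ℕ), i < 2 * r → G w i = some (w i) := by
      intro w i hi
      rw [hGdef]
      dsimp only
      rw [if_neg, if_pos (List.mem_range.2 hi)]
      rw [hysl, mem_ysList_iff]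
      omega
    have F2 : ∀ (w : ℕ → M) (j : ℕ), j < E.length →
        G w (2 * r + 2 * j) = some ((E.getD j dE).realize fi w) := by
      intro w j hj
      rw [hGdef]
      dsimp only
      rw [if_pos (by rw [hysl, mem_ysList_iff]; omega)]
      congr 1
      rw [hWdef]
      dsimp only
      have e1 : (2 * r + 2 * j - 2 * r) / 2 = j := by omega
      have e2 : (2 * r + 2 * j - 2 * r) % 2 = 0 := by omega
      rw [e1, e2, if_pos hj, if_pos rfl]
      apply realize_congr (r := r) _ (hvars _ (List.getD_mem' hj dE))
      intro q hq
      rw [if_pos (List.mem_range.2 (by omega))]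
      rfl
    have F3 : ∀ (w : ℕ → M) (j : ℕ), j < E.length →
        G w (2 * r + 2 * j + 1) = some ((E.getD j dE).realize fi fun q => w (r + q)) := by
      intro w j hj
      rw [hGdef]
      dsimp only
      rw [if_pos (by rw [hysl, mem_ysList_iff]; omega)]
      congr 1
      rw [hWdef]
      dsimp only
      have e1 : (2 * r + 2 * j + 1 - 2 * r) / 2 = j := by omega
      have e2 : ¬ (2 * r + 2 * j + 1 - 2 * r) % 2 = 0 := by omega
      rw [e1, if_pos hj, if_neg e2]
      apply realize_congr (r := r) _ (hvars _ (List.getD_mem' hj dE))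
      intro q hq
      rw [if_pos (List.mem_range.2 (by omega))]
      rfl
    -- the hypotheses of `oreal_compile` for team elements and their primed versions
    have H1 : ∀ w : ℕ → M, ∀ i < r, G w i = some (w i) := fun w i hi => F1 w i (by omega)
    have H2 : ∀ w : ℕ → M, ∀ e ∈ E, G w (2 * r + 2 * idxOf E e) =
        some (ETerm.realize fi w e) := by
      intro w e he
      rw [F2 w _ (idxOf_lt_length he), getD_idxOf he]
    have H1' : ∀ w : ℕ → M, ∀ i < r, (G w ∘ sigv r) i = some (w (r + i)) := by
      intro w i hi
      show G w (sigv r i) = _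
      rw [sigv, if_pos hi]
      exact F1 w _ (by omega)
    have H3 : ∀ w : ℕ → M, ∀ e ∈ E, G w (2 * r + 2 * idxOf E e + 1) =
        some (ETerm.realize fi (fun q => w (r + q)) e) := by
      intro w e he
      rw [F3 w _ (idxOf_lt_length he), getD_idxOf he]
    have H2' : ∀ w : ℕ → M, ∀ e ∈ E, (G w ∘ sigv r) (2 * r + 2 * idxOf E e) =
        some (ETerm.realize fi (fun q => w (r + q)) e) := by
      intro w e he
      show G w (sigv r (2 * r + 2 * idxOf E e)) = _
      rw [sigv, if_neg (by omega)]
      exact H3 w e he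
    rw [theMatrix, strictSat_foldr_and]
    constructor
    · intro ψ hψ
      rcases List.mem_append.1 hψ with hm | hm
      · -- dependence atoms
        rcases mem_depAtoms hm with ⟨j, hj, rfl⟩ | ⟨j, hj, rfl⟩
        · show ∀ s ∈ _, ∀ s' ∈ _, _ → _
          rintro s ⟨w, rfl⟩ s' ⟨w', rfl⟩ hmap
          have hagree : ∀ i < r, w i = w' i := by
            intro i hi
            have := (map_range_eq_iff (G w) (G w') r).1 hmap i hi
            rw [F1 w i (by omega), F1 w' i (by omega)] at this
            exact Option.some_injective _ this
          have hyy : G w (2 * r + 2 * j) = G w' (2 * r + 2 * j) := by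
            rw [F2 w j hj, F2 w' j hj]
            exact congrArg _ (realize_congr hagree (hvars _ (List.getD_mem' hj dE)))
          exact ⟨G w', ⟨w', rfl⟩, hmap.symm, by simp [hyy], rfl⟩
        · show ∀ s ∈ _, ∀ s' ∈ _, _ → _
          rintro s ⟨w, rfl⟩ s' ⟨w', rfl⟩ hmap
          have hmap2 := hmap
          rw [List.map_map, List.map_map] at hmap2
          have hagree : ∀ i < r, w (r + i) = w' (r + i) := by
            intro i hi
            have := (map_range_eq_iff _ _ r).1 hmap2 i hi
            simp only [Function.comp_apply] at this
            rw [F1 w _ (by omega), F1 w' _ (by omega)] at this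
            exact Option.some_injective _ this
          have hyy : G w (2 * r + 2 * j + 1) = G w' (2 * r + 2 * j + 1) := by
            rw [F3 w j hj, F3 w' j hj]
            exact congrArg _ (realize_congr hagree (hvars _ (List.getD_mem' hj dE)))
          exact ⟨G w', ⟨w', rfl⟩, hmap.symm, by simp [hyy], rfl⟩
      · -- consistency atoms
        obtain ⟨e₁, he₁, e₂, he₂, rfl⟩ := mem_consAtoms hm
        rw [strictSat_iff_foSat _ (consF_props e₁ e₂).2.2.2.2.1 (consF_props e₁ e₂).2.2.2.2.2]
        rintro s ⟨w, rfl⟩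
        obtain ⟨f, ts, rfl⟩ := hshape e₁ he₁
        obtain ⟨f', ts', rfl⟩ := hshape e₂ he₂
        rw [consF_eq]
        split_ifs with hff
        · subst hff
          rw [foSat_foldr_or]
          by_cases hargs : ∀ i : Fin (ar f),
              (ts i).realize fi w = (ts' i).realize fi (fun q => w (r + q))
          · right
            refine ⟨(ETerm.efunc f ts).realize fi w, H2 w _ he₁, ?_⟩
            have : (ETerm.efunc f ts').realize fi (fun q => w (r + q))
                = (ETerm.efunc f ts).realize fi w := by
              show fi f _ = fi f _
              exact congrArg _ (funext fun i => (hargs i).symm)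
            rw [← this]
            exact H3 w _ he₂
          · left
            push_neg at hargs
            obtain ⟨i, hne⟩ := hargs
            refine ⟨_, List.mem_ofFn.2 ⟨i, rfl⟩, ?_⟩
            show foSat M (G w) (TF.tne (compile r E (ts i))
              ((compile r E (ts' i)).relabel (sigv r)))
            refine ⟨(ts i).realize fi w, (ts' i).realize fi (fun q => w (r + q)), ?_, ?_, hne⟩
            · exact oreal_compile fi (H1 w) (H2 w) ((hvars _ he₁) i)
                (fun x hx => hc _ he₁ x (mem_esub_earg i hx))
            · rw [oreal_relabel]
              exact oreal_compile fi (H1' w) (H2' w) ((hvars _ he₂) i)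
                (fun x hx => hc _ he₂ x (mem_esub_earg i hx))
        · exact ⟨(ETerm.efunc f ts).realize fi w, H2 w _ he₁, H2 w _ he₁⟩
    · -- the compiled matrix formula
      rw [strictSat_iff_foSat _ (isFO_compileF θ) (quantFree_compileF θ)]
      rintro s ⟨w, rfl⟩
      exact (foSat_compileF fi (fun t ht hE => oreal_compile fi (H1 w) (H2 w) ht hE)
        hθ hθE).2 (hfi w)
end Backward
section Forward
variable {L : FirstOrder.Language.{u, v}} {F : Type} {ar : F → ℕ}
variable {M : Type w} [L.Structure M]

lemma option_eq_some_getD {o : Option M} (h : o.isSome) (d : M) : o = some (o.getD d) := by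
  cases o with
  | none => simp at h
  | some a => rfl

lemma forward (d : M) {r : ℕ} {E : List (ETerm L F ar)} {θ : EQF L F ar}
    (hθ : θ.varsLT r)
    (hc : ∀ x ∈ E, ∀ y ∈ esub x, y ∈ E)
    (hvars : ∀ e ∈ E, ETerm.varsLT r e)
    (hθE : ∀ x ∈ subF θ, x ∈ E)
    (hshape : ∀ e ∈ E, ∃ (f : F) (ts : Fin (ar f) → ETerm L F ar), e = .efunc f ts)
    (h : strictSat M {emptyAssign M} (theSentence r E θ)) : esoTrue M θ := by
  classical
  haveI : Nonempty M := ⟨d⟩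
  rw [theSentence, strictSat_alls, extA_eq _ List.nodup_range] at h
  obtain ⟨g, g1, g2, h3⟩ := exsSatE _ _ _ h
  set A : (ℕ → M) → ℕ → Option M := fun w i =>
    if i ∈ List.range (2 * r) then some (w i) else emptyAssign M i with hA
  have hTeam : g '' {t | ∃ s ∈ ({emptyAssign M} : Set (ℕ → Option M)), ∃ w : ℕ → M,
      t = fun i => if i ∈ List.range (2 * r) then some (w i) else s i}
      = {t | ∃ w : ℕ → M, t = g (A w)} := by
    ext t
    simp only [Set.mem_image, Set.mem_setOf_eq, Set.mem_singleton_iff]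
    constructor
    · rintro ⟨s₁, ⟨s, rfl, w, rfl⟩, rfl⟩; exact ⟨w, rfl⟩
    · rintro ⟨w, rfl⟩; exact ⟨A w, ⟨emptyAssign M, rfl, w, rfl⟩, rfl⟩
  rw [hTeam] at h3
  -- basic facts about team elements
  have P1 : ∀ (w : ℕ → M) (i : ℕ), i < 2 * r → g (A w) i = some (w i) := by
    intro w i hi
    rw [g1 _ i (by rw [mem_ysList_iff]; omega), hA]
    simp [List.mem_range, hi, emptyAssign]
  have P2 : ∀ (w : ℕ → M) (j : ℕ), j < E.length → ∃ m : M, g (A w) (2 * r + 2 * j) = some m ∧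
      g (A w) (2 * r + 2 * j + 1) = some m → True := fun _ _ _ => ⟨d, by simp⟩
  clear P2
  have P2 : ∀ (w : ℕ → M) (i : ℕ), 2 * r ≤ i → i < 2 * r + 2 * E.length →
      ∃ m : M, g (A w) i = some m := by
    intro w i h1 h2
    exact g2 _ i (by rw [mem_ysList_iff]; omega)
  rw [theMatrix, strictSat_foldr_and] at h3
  obtain ⟨hAtoms, hBase⟩ := h3
  -- dependence facts
  have D1 : ∀ e ∈ E, ∀ w w' : ℕ → M, (∀ i < r, w i = w' i) →
      g (A w) (2 * r + 2 * idxOf E e) = g (A w') (2 * r + 2 * idxOf E e) := by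
    intro e he w w' hag
    have hmem : (TF.indep (L := L) (List.range r) [2 * r + 2 * idxOf E e]
        [2 * r + 2 * idxOf E e]) ∈ depAtoms (F := F) (ar := ar) r E ++ consAtoms r E := by
      apply List.mem_append.2 (Or.inl (List.mem_append.2 (Or.inl _)))
      exact List.mem_map.2 ⟨idxOf E e, List.mem_range.2 (idxOf_lt_length he), rfl⟩
    have hsat := hAtoms _ hmem
    have hmap : (List.range r).map (g (A w)) = (List.range r).map (g (A w')) :=
      (map_range_eq_iff _ _ r).2 fun i hi => by
        rw [P1 w i (by omega), P1 w' i (by omega), hag i hi]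
    obtain ⟨s'', _, _, hy1, hy2⟩ := hsat (g (A w)) ⟨w, rfl⟩ (g (A w')) ⟨w', rfl⟩ hmap
    simp only [List.map_cons, List.map_nil, List.cons.injEq, and_true] at hy1 hy2
    rw [← hy1, ← hy2]
  have D2 : ∀ e ∈ E, ∀ w w' : ℕ → M, (∀ i < r, w (r + i) = w' (r + i)) →
      g (A w) (2 * r + 2 * idxOf E e + 1) = g (A w') (2 * r + 2 * idxOf E e + 1) := by
    intro e he w w' hag
    have hmem : (TF.indep (L := L) ((List.range r).map (r + ·)) [2 * r + 2 * idxOf E e + 1]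
        [2 * r + 2 * idxOf E e + 1]) ∈ depAtoms (F := F) (ar := ar) r E ++ consAtoms r E := by
      apply List.mem_append.2 (Or.inl (List.mem_append.2 (Or.inr _)))
      exact List.mem_map.2 ⟨idxOf E e, List.mem_range.2 (idxOf_lt_length he), rfl⟩
    have hsat := hAtoms _ hmem
    have hmap : ((List.range r).map (r + ·)).map (g (A w))
        = ((List.range r).map (r + ·)).map (g (A w')) := by
      rw [List.map_map, List.map_map]
      refine (map_range_eq_iff _ _ r).2 fun i hi => ?_
      show g (A w) (r + i) = g (A w') (r + i)
      rw [P1 w _ (by omega), P1 w' _ (by omega), hag i hi]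
    obtain ⟨s'', _, _, hy1, hy2⟩ := hsat (g (A w)) ⟨w, rfl⟩ (g (A w')) ⟨w', rfl⟩ hmap
    simp only [List.map_cons, List.map_nil, List.cons.injEq, and_true] at hy1 hy2
    rw [← hy1, ← hy2]
  -- consistency facts
  have C : ∀ e₁ ∈ E, ∀ e₂ ∈ E, ∀ w : ℕ → M, foSat M (g (A w)) (consF r E e₁ e₂) := by
    intro e₁ he₁ e₂ he₂ w
    have hmem : consF r E e₁ e₂ ∈ depAtoms (F := F) (ar := ar) r E ++ consAtoms r E :=
      List.mem_append.2 (Or.inr (List.mem_flatMap.2 ⟨e₁, he₁,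
        List.mem_map.2 ⟨e₂, he₂, rfl⟩⟩))
    have hsat := hAtoms _ hmem
    rw [strictSat_iff_foSat _ (consF_props e₁ e₂).2.2.2.2.1
      (consF_props e₁ e₂).2.2.2.2.2] at hsat
    exact hsat _ ⟨w, rfl⟩
  -- the mirror lemma
  have KEY : ∀ t : ETerm L F ar, t.varsLT r → (∀ x ∈ esub t, x ∈ E) →
      ∀ w w' : ℕ → M, (∀ i < r, w i = w' (r + i)) →
      oreal (g (A w)) (compile r E t) = oreal (g (A w') ∘ sigv r) (compile r E t) := by
    intro t
    induction t with
    | var n =>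
        intro ht _ w w' hww
        have htn : n < r := ht
        show g (A w) n = g (A w') (sigv r n)
        rw [sigv, if_pos htn, P1 w n (by omega), P1 w' _ (by omega), hww n htn]
    | func gf ts ih =>
        intro ht hE w w' hww
        rw [compile]
        exact oreal_func_congr fun i =>
          ih i (ht i) (fun x hx => hE x (mem_esub_arg i hx)) w w' hww
    | efunc f ts ih =>
        intro ht hE w w' hww
        have he : ETerm.efunc f ts ∈ E := hE _ (mem_esub_self f ts)
        set j := idxOf E (ETerm.efunc f ts) with hj
        have hjlt : j < E.length := idxOf_lt_length he
        show g (A w) (2 * r + 2 * j) = g (A w') (sigv r (2 * r + 2 * j))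
        rw [sigv, if_neg (by omega)]
        set u : ℕ → M := fun i => if i < r then w i else w' i with hu
        have hu1 : ∀ i < r, u i = w i := fun i hi => by rw [hu]; simp [hi]
        have hu2 : ∀ i < r, u (r + i) = w' (r + i) := fun i hi => by
          rw [hu]; simp only [hu]; rw [if_neg (by omega)]
        have hudiag : ∀ i < r, u i = u (r + i) := fun i hi => by
          rw [hu1 i hi, hu2 i hi]; exact hww i hi
        have step1 : g (A w) (2 * r + 2 * j) = g (A u) (2 * r + 2 * j) :=
          D1 _ he w u (fun i hi => (hu1 i hi).symm)
        have step3 : g (A u) (2 * r + 2 * j + 1) = g (A w') (2 * r + 2 * j + 1) :=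
          D2 _ he u w' hu2
        have step2 : g (A u) (2 * r + 2 * j) = g (A u) (2 * r + 2 * j + 1) := by
          have hfo := C _ he _ he u
          rw [consF_eq, dif_pos rfl, foSat_foldr_or] at hfo
          rcases hfo with ⟨ψ, hψ, hfoψ⟩ | hfoψ
          · exfalso
            obtain ⟨i, rfl⟩ := List.mem_ofFn.1 hψ
            obtain ⟨a, b, ha, hb, hab⟩ := hfoψ
            rw [oreal_relabel] at hb
            have ha' : oreal (g (A u)) (compile r E (ts i)) = some a := ha
            have hb' : oreal (g (A u) ∘ sigv r) (compile r E (ts i)) = some b := hb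
            have := ih i (ht i) (fun x hx => hE x (mem_esub_earg i hx)) u u hudiag
            rw [ha', hb'] at this
            exact hab (Option.some_injective _ this)
          · obtain ⟨a, ha1, ha2⟩ := hfoψ
            have ha1' : g (A u) (2 * r + 2 * j) = some a := ha1
            have ha2' : g (A u) (2 * r + 2 * j + 1) = some a := ha2
            rw [ha1', ha2']
        rw [step1, step2, step3]
  -- dependence on the first block only (unprimed values)
  have KEY2 : ∀ t : ETerm L F ar, t.varsLT r → (∀ x ∈ esub t, x ∈ E) →
      ∀ w w' : ℕ → M, (∀ i < r, w i = w' i) →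
      oreal (g (A w)) (compile r E t) = oreal (g (A w')) (compile r E t) := by
    intro t
    induction t with
    | var n =>
        intro ht _ w w' hww
        have htn : n < r := ht
        show g (A w) n = g (A w') n
        rw [P1 w n (by omega), P1 w' n (by omega), hww n htn]
    | func gf ts ih =>
        intro ht hE w w' hww
        rw [compile]
        exact oreal_func_congr fun i =>
          ih i (ht i) (fun x hx => hE x (mem_esub_arg i hx)) w w' hww
    | efunc f ts ih =>
        intro ht hE w w' hww
        exact D1 _ (hE _ (mem_esub_self f ts)) w w' hww
  -- definedness
  have DEF : ∀ t : ETerm L F ar, t.varsLT r → (∀ x ∈ esub t, x ∈ E) →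
      ∀ w : ℕ → M, (oreal (g (A w)) (compile r E t)).isSome := by
    intro t
    induction t with
    | var n =>
        intro ht _ w
        have htn : n < r := ht
        show (g (A w) n).isSome = true
        rw [P1 w n (by omega)]; rfl
    | func gf ts ih =>
        intro ht hE w
        rw [compile, oreal_isSome_func]
        exact fun i => ih i (ht i) (fun x hx => hE x (mem_esub_arg i hx)) w
    | efunc f ts ih =>
        intro ht hE w
        have he : ETerm.efunc f ts ∈ E := hE _ (mem_esub_self f ts)
        obtain ⟨m, hm⟩ := P2 w (2 * r + 2 * idxOf E (ETerm.efunc f ts)) (by omega)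
          (by have := idxOf_lt_length he; omega)
        show (g (A w) _).isSome = true
        rw [hm]; rfl
  -- values of compiled terms
  set val : (ℕ → M) → ETerm L F ar → M :=
    fun w t => (oreal (g (A w)) (compile r E t)).getD d with hvaldef
  have hval : ∀ t : ETerm L F ar, t.varsLT r → (∀ x ∈ esub t, x ∈ E) → ∀ w : ℕ → M,
      oreal (g (A w)) (compile r E t) = some (val w t) :=
    fun t ht hE w => option_eq_some_getD (DEF t ht hE w) d
  -- the interpretation of the function symbols
  set fi : ∀ f : F, (Fin (ar f) → M) → M := fun f a =>
    if hx : ∃ p : (Fin (ar f) → ETerm L F ar) × (ℕ → M),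
        ETerm.efunc f p.1 ∈ E ∧ ∀ i, val p.2 (p.1 i) = a i
    then val hx.choose.2 (.efunc f hx.choose.1) else d with hfidef
  -- well-definedness
  have WD : ∀ (f : F) (ts ts' : Fin (ar f) → ETerm L F ar) (w w' : ℕ → M),
      ETerm.efunc f ts ∈ E → ETerm.efunc f ts' ∈ E →
      (∀ i, val w (ts i) = val w' (ts' i)) →
      val w (.efunc f ts) = val w' (.efunc f ts') := by
    intro f ts ts' w w' he₁ he₂ hagree
    set u : ℕ → M := fun i => if i < r then w i else w' (i - r) with hu
    have hu1 : ∀ i < r, w i = u i := fun i hi => by rw [hu]; simp [hi]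
    have hu2 : ∀ i < r, w' i = u (r + i) := fun i hi => by
      rw [hu]; simp only; rw [if_neg (by omega)]; congr 1; omega
    have hv₁ : (ETerm.efunc f ts).varsLT r := hvars _ he₁
    have hv₂ : (ETerm.efunc f ts').varsLT r := hvars _ he₂
    have hE₁ : ∀ i : Fin (ar f), ∀ x ∈ esub (ts i), x ∈ E :=
      fun i x hx => hc _ he₁ x (mem_esub_earg i hx)
    have hE₂ : ∀ i : Fin (ar f), ∀ x ∈ esub (ts' i), x ∈ E :=
      fun i x hx => hc _ he₂ x (mem_esub_earg i hx)
    have hfo := C _ he₁ _ he₂ u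
    rw [consF_eq, dif_pos rfl, foSat_foldr_or] at hfo
    rcases hfo with ⟨ψ, hψ, hfoψ⟩ | hfoψ
    · exfalso
      obtain ⟨i, rfl⟩ := List.mem_ofFn.1 hψ
      obtain ⟨a, b, ha, hb, hab⟩ := hfoψ
      rw [oreal_relabel] at hb
      have ha' : oreal (g (A u)) (compile r E (ts i)) = some a := ha
      have hb' : oreal (g (A u) ∘ sigv r) (compile r E (ts' i)) = some b := hb
      have e1 : oreal (g (A u)) (compile r E (ts i)) = some (val w (ts i)) := by
        rw [KEY2 (ts i) (hv₁ i) (hE₁ i) u w (fun q hq => (hu1 q hq).symm)]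
        exact hval (ts i) (hv₁ i) (hE₁ i) w
      have e2 : oreal (g (A u) ∘ sigv r) (compile r E (ts' i)) = some (val w' (ts' i)) := by
        rw [← KEY (ts' i) (hv₂ i) (hE₂ i) w' u hu2]
        exact hval (ts' i) (hv₂ i) (hE₂ i) w'
      have hae : a = val w (ts i) := Option.some_injective _ (ha'.symm.trans e1)
      have hbe : b = val w' (ts' i) := Option.some_injective _ (hb'.symm.trans e2)
      exact hab (by rw [hae, hbe, ← hagree i])
    · obtain ⟨a, ha1, ha2⟩ := hfoψ
      have ha1' : g (A u) (2 * r + 2 * idxOf E (ETerm.efunc f ts)) = some a := ha1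
      have ha2' : g (A u) (2 * r + 2 * idxOf E (ETerm.efunc f ts') + 1) = some a := ha2
      have e1 : g (A w) (2 * r + 2 * idxOf E (ETerm.efunc f ts))
          = some (val w (ETerm.efunc f ts)) := hval _ hv₁ (hc _ he₁) w
      have e1' : g (A w) (2 * r + 2 * idxOf E (ETerm.efunc f ts))
          = g (A u) (2 * r + 2 * idxOf E (ETerm.efunc f ts)) := D1 _ he₁ w u hu1
      have e2 : g (A w') (2 * r + 2 * idxOf E (ETerm.efunc f ts'))
          = some (val w' (ETerm.efunc f ts')) := hval _ hv₂ (hc _ he₂) w'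
      have e2' : g (A w') (2 * r + 2 * idxOf E (ETerm.efunc f ts'))
          = g (A u) (sigv r (2 * r + 2 * idxOf E (ETerm.efunc f ts'))) :=
        KEY _ hv₂ (hc _ he₂) w' u hu2
      rw [sigv, if_neg (by omega)] at e2'
      have hv1 : some (val w (ETerm.efunc f ts)) = some a := by
        rw [← e1, e1', ha1']
      have hv2 : some (val w' (ETerm.efunc f ts')) = some a := by
        rw [← e2, e2', ha2']
      rw [Option.some_injective _ hv1, Option.some_injective _ hv2]
  -- the interpretation evaluates compiled terms correctly
  have REAL : ∀ t : ETerm L F ar, t.varsLT r → (∀ x ∈ esub t, x ∈ E) →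
      ∀ w : ℕ → M, t.realize fi w = val w t := by
    intro t
    induction t with
    | var n =>
        intro ht _ w
        have htn : n < r := ht
        show w n = val w (.var n)
        have : oreal (g (A w)) (compile r E (.var n)) = some (w n) := P1 w n (by omega)
        rw [hvaldef]
        show w n = (oreal (g (A w)) (compile r E (.var n))).getD d
        rw [this]; rfl
    | func gf ts ih =>
        intro ht hE w
        have hv : ∀ i, oreal (g (A w)) (compile r E (ts i)) = some ((ts i).realize fi w) := by
          intro i
          rw [ih i (ht i) (fun x hx => hE x (mem_esub_arg i hx)) w]
          exact hval (ts i) (ht i) (fun x hx => hE x (mem_esub_arg i hx)) w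
        have hfn : oreal (g (A w)) (compile r E (.func gf ts))
            = some (funMap gf fun i => (ts i).realize fi w) := by
          rw [compile]; exact oreal_func_some hv
        show funMap gf (fun i => (ts i).realize fi w) = _
        rw [hvaldef]
        show _ = (oreal (g (A w)) (compile r E (.func gf ts))).getD d
        rw [hfn]; rfl
    | efunc f ts ih =>
        intro ht hE w
        have he : ETerm.efunc f ts ∈ E := hE _ (mem_esub_self f ts)
        show fi f (fun i => (ts i).realize fi w) = _
        have hargs : (fun i => (ts i).realize fi w) = fun i => val w (ts i) :=
          funext fun i => ih i (ht i) (fun x hx => hE x (mem_esub_earg i hx)) w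
        rw [hargs]
        have hx : ∃ p : (Fin (ar f) → ETerm L F ar) × (ℕ → M),
            ETerm.efunc f p.1 ∈ E ∧ ∀ i, val p.2 (p.1 i) = val w (ts i) :=
          ⟨(ts, w), he, fun i => rfl⟩
        have hfieq : fi f (fun i => val w (ts i)) = val hx.choose.2 (.efunc f hx.choose.1) := by
          rw [hfidef]
          exact dif_pos hx
        rw [hfieq]
        exact WD f hx.choose.1 ts hx.choose.2 w hx.choose_spec.1 he hx.choose_spec.2
  -- conclude
  refine ⟨fi, fun s => ?_⟩
  have hfo := (strictSat_iff_foSat _ (isFO_compileF θ) (quantFree_compileF θ) _).1 hBase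
    (g (A s)) ⟨s, rfl⟩
  exact (foSat_compileF fi
    (fun t ht hE => (hval t ht hE s).trans (by rw [REAL t ht hE s])) hθ hθE).1 hfo

end Forward
/-- For every sentence `φ ∈ ESO_f(k∀)` (in Skolem normal form `∃f₁…∃fₙ ∀x₁…∀x_r θ`
with `r ≤ k` and `θ` quantifier-free) there is a sentence `φ'` of independence logic
with at most `2k` universal quantifiers (`φ' ∈ FO(⊥_c)(2k∀)`: only independence
atoms, every variable quantified exactly once) such that for all structures `A` with
at least two elements, `A ⊨ φ` iff `A ⊨ φ'` under strict team semantics. -/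
theorem eso_to_independence {L : FirstOrder.Language.{u, v}} (k n : ℕ)
    (ar : Fin n → ℕ) (r : ℕ) (θ : EQF L (Fin n) ar) (hr : r ≤ k)
    (hv : θ.varsLT r) :
    ∃ φ' : TF L,
      freeVars φ' = ∅ ∧ (boundVars φ').Nodup ∧ uCount φ' ≤ 2 * k ∧
      ¬ hasDep φ' ∧ ¬ hasInc φ' ∧
      ∀ (A : Type w) [L.Structure A], (∃ a b : A, a ≠ b) →
        (esoTrue A θ ↔ tTrue A φ') := by
  classical
  have hc : ∀ x ∈ subF θ, ∀ y ∈ esub x, y ∈ subF θ := fun x hx => subF_trans hx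
  have hvars : ∀ e ∈ subF θ, ETerm.varsLT r e := fun e he => subF_varsLT hv he
  have hθE : ∀ x ∈ subF θ, x ∈ subF θ := fun x hx => hx
  have hshape : ∀ e ∈ subF θ, ∃ (f : Fin n) (ts : Fin (ar f) → ETerm L (Fin n) ar),
      e = ETerm.efunc f ts := fun e he => subF_shape he
  obtain ⟨h1, h2, h3, h4, h5⟩ := theSentence_static hv hc hvars hθE
  refine ⟨theSentence r (subF θ) θ, h1, h2, by omega, h4, h5, ?_⟩
  intro A _ hA
  obtain ⟨a, b, hab⟩ := hA
  constructor
  · rintro ⟨fi, hfi⟩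
    exact backward a hv hc hvars hθE hshape fi hfi
  · intro ht
    exact forward a hv hc hvars hθE hshape ht

end TeamSem
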